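/- arXiv:1612.00302 — 4 statements merged into one kernel-verified Lean document; each statement's English description precedes it below -/
import Mathlib

section
/- The K-algebra homomorphism φ : F → T^n(A)^{S_n} determined by T_w ↦ [w] for all w ∈ M is surjective. -/
open scoped TensorProduct
open PiTensorProduct

noncomputable section

variable (K : Type*) [Field K] (A : Type*) [CommRing A] [Algebra K A] (n : ℕ)

/-- The algebra endomorphism of the `n`-th tensor power of `A` permuting the tensor
factors according to the permutation `σ` (it sends `a₁ ⊗ ⋯ ⊗ aₙ` to the tensor whose
`σ i`-th slot is `aᵢ`). -/
def permAlgHom (σ : Equiv.Perm (Fin n)) :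
    (⨂[K] _ : Fin n, A) →ₐ[K] ⨂[K] _ : Fin n, A :=
  PiTensorProduct.liftAlgHom ((PiTensorProduct.tprod K).domDomCongr σ)
    (by rw [one_def]; rfl)
    (fun x y => by
      simp only [MultilinearMap.domDomCongr_apply]
      rw [show (fun i => (x * y) (σ i)) = (fun i => x (σ i)) * fun i => y (σ i) from rfl,
        ← tprod_mul_tprod])

/-- The subalgebra `Tⁿ(A)^{Sₙ}` of `Sₙ`-invariants in the `n`-th tensor power of `A`. -/
def symInvariants : Subalgebra K (⨂[K] _ : Fin n, A) :=
  ⨅ σ : Equiv.Perm (Fin n), AlgHom.equalizer (permAlgHom K A n σ) (AlgHom.id K _)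

/-- `[w] = w ⊗ 1 ⊗ ⋯ ⊗ 1 + 1 ⊗ w ⊗ 1 ⊗ ⋯ ⊗ 1 + ⋯ + 1 ⊗ ⋯ ⊗ 1 ⊗ w`. -/
def bracket (w : A) : ⨂[K] _ : Fin n, A :=
  ∑ i : Fin n, tprod K (Function.update (fun _ : Fin n => (1 : A)) i w)

section Aux
variable {K A n}

theorem permAlgHom_tprod (σ : Equiv.Perm (Fin n)) (v : Fin n → A) :
    permAlgHom K A n σ (tprod K v) = tprod K fun i => v (σ i) := by
  simp [permAlgHom, PiTensorProduct.liftAlgHom, PiTensorProduct.lift.tprod]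

theorem tprod_finset_prod {ι : Type*} (t : Finset ι) (v : ι → Fin n → A) :
    (∏ x ∈ t, tprod K (v x)) = tprod K fun j => ∏ x ∈ t, v x j := by
  classical
  induction t using Finset.induction with
  | empty => simp only [Finset.prod_empty]; exact one_def
  | insert _ _ hx ih =>
      rw [Finset.prod_insert hx, ih, tprod_mul_tprod]
      congr 1
      funext j
      rw [Finset.prod_insert hx]
      rfl

theorem permAlgHom_bracket (σ : Equiv.Perm (Fin n)) (w : A) :
    permAlgHom K A n σ (bracket K A n w) = bracket K A n w := by
  unfold bracket
  rw [map_sum]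
  have h : ∀ i : Fin n, permAlgHom K A n σ (tprod K (Function.update (fun _ : Fin n => (1:A)) i w))
      = tprod K (Function.update (fun _ : Fin n => (1:A)) (σ⁻¹ i) w) := by
    intro i
    rw [permAlgHom_tprod]
    congr 1
    funext j
    simp only [Function.update_apply]
    have : σ j = i ↔ j = σ⁻¹ i := by
      constructor <;> intro h <;> subst h <;> simp
    by_cases hc : σ j = i
    · rw [if_pos hc, if_pos (this.mp hc)]
    · rw [if_neg hc, if_neg (fun hh => hc (this.mpr hh))]
  simp_rw [h]
  exact Equiv.sum_comp σ⁻¹ (fun i => tprod K (Function.update (fun _ : Fin n => (1:A)) i w))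

end Aux

section Aux2
variable {K A n}

/-- The symmetrization operator `x ↦ ∑_σ σ·x`. -/
def symOp : (⨂[K] _ : Fin n, A) →ₗ[K] ⨂[K] _ : Fin n, A :=
  ∑ σ : Equiv.Perm (Fin n), (permAlgHom K A n σ).toLinearMap

theorem symOp_apply (x : ⨂[K] _ : Fin n, A) :
    symOp x = ∑ σ : Equiv.Perm (Fin n), permAlgHom K A n σ x := by
  simp [symOp, LinearMap.sum_apply]

theorem symOp_tprod_comp (σ : Equiv.Perm (Fin n)) (v : Fin n → A) :
    symOp (K := K) (tprod K fun i => v (σ i)) = symOp (tprod K v) := by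
  rw [symOp_apply, symOp_apply]
  have h : ∀ τ : Equiv.Perm (Fin n),
      permAlgHom K A n τ (tprod K fun i => v (σ i)) = permAlgHom K A n (σ * τ) (tprod K v) := by
    intro τ
    rw [permAlgHom_tprod, permAlgHom_tprod]
    rfl
  simp_rw [h]
  exact Equiv.sum_comp (Equiv.mulLeft σ) fun ρ => permAlgHom K A n ρ (tprod K v)

theorem symOp_of_invariant (x : ⨂[K] _ : Fin n, A) (hx : x ∈ symInvariants K A n)
    : symOp (K := K) x = (Nat.factorial n) • x := by
  rw [symOp_apply]
  have h : ∀ σ : Equiv.Perm (Fin n), permAlgHom K A n σ x = x := by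
    intro σ
    have := (Algebra.mem_iInf.mp hx) σ
    exact this
  simp_rw [h, Finset.sum_const, Finset.card_univ, Fintype.card_perm, Fintype.card_fin]

/-- Multilinear expansion of a pure tensor in a basis, relative to a finset `t` of slots. -/
theorem tprod_mem_span_basis {ι : Type*} (b : Module.Basis ι K A) (t : Finset (Fin n)) :
    ∀ (f₀ : Fin n → ι) (v : Fin n → A), (∀ j ∉ t, v j = b (f₀ j)) →
    tprod K v ∈ Submodule.span K {x : ⨂[K] _ : Fin n, A |
      ∃ f : Fin n → ι, (∀ j ∉ t, f j = f₀ j) ∧ x = tprod K fun j => b (f j)} := by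
  classical
  induction t using Finset.induction with
  | empty =>
      intro f₀ v hv
      apply Submodule.subset_span
      exact ⟨f₀, fun j _ => rfl, by rw [funext fun j => hv j (Finset.notMem_empty j)]⟩
  | @insert a t hat ih =>
      intro f₀ v hv
      have hrepr : v a = ∑ i ∈ (b.repr (v a)).support, (b.repr (v a)) i • b i := by
        have := b.linearCombination_repr (v a)
        rw [Finsupp.linearCombination_apply] at this
        exact this.symm
      have hupd : v = Function.update v a (v a) := (Function.update_eq_self a v).symm
      rw [hupd, hrepr, MultilinearMap.map_update_sum]
      apply Submodule.sum_mem
      intro i _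
      rw [MultilinearMap.map_update_smul]
      apply Submodule.smul_mem
      have hmem := ih (Function.update f₀ a i) (Function.update v a (b i)) ?cond
      · refine Submodule.span_mono ?_ hmem
        rintro x ⟨f, hf, rfl⟩
        refine ⟨f, fun j hj => ?_, rfl⟩
        have hja : j ≠ a := fun h => hj (h ▸ Finset.mem_insert_self a t)
        have hjt : j ∉ t := fun h => hj (Finset.mem_insert_of_mem h)
        rw [hf j hjt, Function.update_apply, if_neg hja]
      case cond =>
        intro j hj
        by_cases hja : j = a
        · subst hja; simp
        · rw [Function.update_apply, if_neg hja, Function.update_apply, if_neg hja,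
            hv j (by simp [hja, hj])]

/-- Any two injections between fintypes of equal domain can be matched by a permutation. -/
theorem exists_perm_comp {k : ℕ} (u₁ u₂ : Fin k → Fin n) (h₁ : Function.Injective u₁)
    (h₂ : Function.Injective u₂) : ∃ σ : Equiv.Perm (Fin n), ∀ i, σ (u₁ i) = u₂ i := by
  classical
  set s : Finset (Fin n) := Finset.image u₁ Finset.univ with hs
  set f : Fin n → Fin n := fun j => if h : ∃ i, u₁ i = j then u₂ h.choose else j with hf
  have hfs : ∀ i : Fin k, f (u₁ i) = u₂ i := by
    intro i
    have h : ∃ i', u₁ i' = u₁ i := ⟨i, rfl⟩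
    have : h.choose = i := h₁ h.choose_spec
    simp [hf, dif_pos h, this]
  have hinj : Set.InjOn f s := by
    intro j₁ hj₁ j₂ hj₂ hf12
    rw [hs, Finset.coe_image] at hj₁ hj₂
    obtain ⟨i₁, _, rfl⟩ := hj₁
    obtain ⟨i₂, _, rfl⟩ := hj₂
    rw [hfs, hfs] at hf12
    exact congrArg u₁ (h₂ hf12)
  have hsub : Finset.image f s ⊆ Finset.univ := Finset.subset_univ _
  obtain ⟨g, hg⟩ := Finset.exists_equiv_extend_of_card_eq
    (by simp : Fintype.card (Fin n) = (Finset.univ : Finset (Fin n)).card) hsub hinj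
  refine ⟨g.trans (Equiv.subtypeUnivEquiv fun x => Finset.mem_univ x), fun i => ?_⟩
  have := hg (u₁ i) (Finset.mem_image_of_mem u₁ (Finset.mem_univ i))
  simpa [hfs i] using this

theorem cast_ne_zero_of_dvd_factorial (hchar : ringChar K = 0 ∨ n < ringChar K)
    {m : ℕ} (hm : m ∣ Nat.factorial n) (h0 : m ≠ 0) : (m : K) ≠ 0 := by
  intro h
  have hdvd : ringChar K ∣ m := (ringChar.spec K m).mp h
  rcases hchar with h0' | hlt
  · rw [h0', zero_dvd_iff] at hdvd; exact h0 hdvd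
  · have hp : (ringChar K).Prime := by
      rcases CharP.char_is_prime_or_zero K (ringChar K) with hp | hp
      · exact hp
      · omega
    have : ringChar K ≤ n := (Nat.Prime.dvd_factorial hp).mp (hdvd.trans hm)
    omega

end Aux2

section Key
variable {K A n}

theorem range_le_symInvariants (M : Set A) :
    (MvPolynomial.aeval fun w : M => bracket K A n (w : A) :
        MvPolynomial M K →ₐ[K] ⨂[K] _ : Fin n, A).range ≤ symInvariants K A n := by
  rw [← Algebra.adjoin_range_eq_range_aeval]
  apply Algebra.adjoin_le
  rintro x ⟨wm, rfl⟩
  exact Algebra.mem_iInf.mpr fun σ => permAlgHom_bracket σ _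

theorem key_lemma (hchar : ringChar K = 0 ∨ n < ringChar K)
    (M : Set A) (bA : Module.Basis (Option M) K A)
    (hb1 : bA none = 1) (hbM : ∀ w : M, bA (some w) = (w : A)) :
    ∀ k : ℕ, ∀ f : Fin n → Option M,
      (Finset.univ.filter fun j => (f j).isSome).card ≤ k →
      symOp (tprod K fun j => bA (f j)) ∈
        (MvPolynomial.aeval fun w : M => bracket K A n (w : A) :
          MvPolynomial M K →ₐ[K] ⨂[K] _ : Fin n, A).range := by
  classical
  set R := (MvPolynomial.aeval fun w : M => bracket K A n (w : A) :
      MvPolynomial M K →ₐ[K] ⨂[K] _ : Fin n, A).range with hRdef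
  intro k
  induction k using Nat.strong_induction_on with
  | _ k IH =>
  intro f hf
  set s : Finset (Fin n) := Finset.univ.filter (fun j => (f j).isSome) with hs
  rcases lt_or_eq_of_le hf with hlt | hk
  · exact IH s.card hlt f le_rfl
  -- main case : s.card = k
  have hkn : k ≤ n := by
    rw [← hk]
    exact le_trans (Finset.card_filter_le _ _) (le_of_eq (by simp))
  set e : Fin k ≃ {x // x ∈ s} := (finCongr hk.symm).trans s.equivFin.symm with he
  have hfe : ∀ i : Fin k, (f (e i : Fin n)).isSome := fun i => (Finset.mem_filter.mp (e i).2).2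
  set m : Fin k → M := fun i => (f (e i : Fin n)).get (hfe i)
    with hmdef
  have hm : ∀ i, f (e i : Fin n) = some (m i) := fun i => (Option.some_get _).symm
  set w : Fin k → A := fun i => (m i : A) with hw
  have hbw : ∀ i, bA (f (e i : Fin n)) = w i := fun i => by rw [hm i, hbM]
  -- the product of brackets
  set P : ⨂[K] _ : Fin n, A := ∏ i : Fin k, bracket K A n (w i) with hP
  have hPR : P ∈ R := by
    apply Subalgebra.prod_mem
    intro i _
    exact ⟨MvPolynomial.X (m i), MvPolynomial.aeval_X _ (m i)⟩
  have hPinv : P ∈ symInvariants K A n := range_le_symInvariants M hPR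
  -- expansion of the product
  set hfun : (Fin k → Fin n) → Fin n → A :=
    fun g j => ∏ i ∈ Finset.univ.filter (fun i => g i = j), w i with hhfun
  have hexp : P = ∑ g : Fin k → Fin n, tprod K (hfun g) := by
    have h1 : P = ∏ i : Fin k, ∑ j : Fin n,
        tprod K (Function.update (fun _ : Fin n => (1 : A)) j (w i)) := rfl
    rw [h1, Finset.prod_univ_sum, Fintype.piFinset_univ]
    apply Finset.sum_congr rfl
    intro g _
    rw [tprod_finset_prod]
    congr 1
    funext j
    simp only [hhfun]
    rw [Finset.prod_filter]
    apply Finset.prod_congr rfl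
    intro i _
    rw [Function.update_apply]
    exact if_congr eq_comm rfl rfl
  have h1 : (Nat.factorial n) • P = ∑ g : Fin k → Fin n, symOp (tprod K (hfun g)) := by
    rw [← symOp_of_invariant P hPinv, hexp, map_sum]
  -- split the sum
  rw [← Finset.sum_filter_add_sum_filter_not Finset.univ (fun g : Fin k → Fin n =>
    Function.Injective g) (fun g => symOp (K := K) (tprod K (hfun g)))] at h1
  -- injective terms
  have hinjterm : ∀ g ∈ Finset.univ.filter (fun g : Fin k → Fin n => Function.Injective g),
      symOp (K := K) (tprod K (hfun g)) = symOp (tprod K fun j => bA (f j)) := by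
    intro g hg
    have hginj : Function.Injective g := (Finset.mem_filter.mp hg).2
    set u₂ : Fin k → Fin n := fun i => (e i : Fin n) with hu₂
    have h₂ : Function.Injective u₂ := fun i₁ i₂ h =>
      e.injective (Subtype.val_injective h)
    obtain ⟨σ, hσ⟩ := exists_perm_comp g u₂ hginj h₂
    have hpt : hfun g = fun j => bA (f (σ j)) := by
      funext j
      by_cases hj : ∃ i, g i = j
      · obtain ⟨i, rfl⟩ := hj
        have hfilter : Finset.univ.filter (fun i' => g i' = g i) = {i} := by
          ext i'
          simp [hginj.eq_iff]
        simp only [hhfun]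
        rw [hfilter, Finset.prod_singleton, hσ i, hbw i]
      · have hfil : Finset.univ.filter (fun i => g i = j) = ∅ := by
          apply Finset.filter_eq_empty_iff.mpr
          intro i _
          exact fun h => hj ⟨i, h⟩
        have hσj : σ j ∉ s := by
          intro hmem
          apply hj
          refine ⟨e.symm ⟨σ j, hmem⟩, ?_⟩
          apply σ.injective
          rw [hσ]
          simp [hu₂]
        have hfn : f (σ j) = none := by
          rw [← Option.not_isSome_iff_eq_none]
          exact fun hne => hσj (Finset.mem_filter.mpr ⟨Finset.mem_univ _, hne⟩)
        simp only [hhfun]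
        rw [hfil, Finset.prod_empty, hfn, hb1]
    rw [hpt]
    exact symOp_tprod_comp σ (fun j => bA (f j))
  rw [Finset.sum_congr rfl hinjterm, Finset.sum_const] at h1
  -- noninjective terms
  have hnoninj : (∑ g ∈ Finset.univ.filter (fun g : Fin k → Fin n => ¬ Function.Injective g),
      symOp (K := K) (tprod K (hfun g))) ∈ R := by
    apply Subalgebra.sum_mem
    intro g hg
    have hgni : ¬ Function.Injective g := (Finset.mem_filter.mp hg).2
    set t : Finset (Fin n) := Finset.image g Finset.univ with ht
    have htk : t.card < k := by
      have hle : t.card ≤ k := le_trans Finset.card_image_le (by simp)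
      rcases lt_or_eq_of_le hle with h | h
      · exact h
      · exfalso
        apply hgni
        have : t.card = (Finset.univ : Finset (Fin k)).card := by simp [h]
        have hinj := Finset.card_image_iff.mp this
        intro a b hab
        exact hinj (by simp) (by simp) hab
    have hzero : ∀ j ∉ t, hfun g j = bA ((fun _ : Fin n => (none : Option M)) j) := by
      intro j hj
      have hfil : Finset.univ.filter (fun i => g i = j) = ∅ := by
        apply Finset.filter_eq_empty_iff.mpr
        intro i _
        exact fun h => hj (h ▸ Finset.mem_image_of_mem g (Finset.mem_univ i))
      simp only [hhfun]
      rw [hfil, Finset.prod_empty, hb1]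
    have hspan := tprod_mem_span_basis bA t (fun _ => none) (hfun g) hzero
    have hle : Submodule.span K {x : ⨂[K] _ : Fin n, A |
        ∃ f' : Fin n → Option M, (∀ j ∉ t, f' j = none) ∧ x = tprod K fun j => bA (f' j)} ≤
        (Subalgebra.toSubmodule R).comap (symOp (K := K) (A := A) (n := n)) := by
      apply Submodule.span_le.mpr
      rintro x ⟨f', hf', rfl⟩
      apply IH t.card htk f'
      apply Finset.card_le_card
      intro j hj
      have h2 : (f' j).isSome := (Finset.mem_filter.mp hj).2
      by_contra hjt
      rw [hf' j hjt] at h2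
      exact Bool.noConfusion h2
    have := hle hspan
    simpa using this
  -- conclude
  set N : ℕ := (Finset.univ.filter (fun g : Fin k → Fin n => Function.Injective g)).card with hN
  have hkey : N • symOp (K := K) (tprod K fun j => bA (f j)) =
      (Nat.factorial n) • P - ∑ g ∈ Finset.univ.filter
        (fun g : Fin k → Fin n => ¬ Function.Injective g), symOp (K := K) (tprod K (hfun g)) := by
    rw [h1]; abel
  have hmemN : N • symOp (K := K) (tprod K fun j => bA (f j)) ∈ R := by
    rw [hkey]
    exact Subalgebra.sub_mem _ (Subalgebra.nsmul_mem _ hPR _) hnoninj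
  -- N is nonzero in K
  have hNcard : N = Nat.descFactorial n k := by
    rw [hN, ← Fintype.card_subtype,
      Fintype.card_congr (Equiv.subtypeInjectiveEquivEmbedding (Fin k) (Fin n)),
      Fintype.card_embedding_eq, Fintype.card_fin, Fintype.card_fin]
  have hNdvd : N ∣ Nat.factorial n := by
    rw [hNcard]
    exact ⟨(n - k).factorial, by rw [← Nat.factorial_mul_descFactorial hkn, Nat.mul_comm]⟩
  have hN0 : N ≠ 0 := by
    intro h0
    have := Nat.factorial_mul_descFactorial hkn
    rw [← hNcard, h0, Nat.mul_zero] at this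
    exact Nat.factorial_ne_zero n this.symm
  have hNK : (N : K) ≠ 0 := cast_ne_zero_of_dvd_factorial hchar hNdvd hN0
  have : symOp (K := K) (tprod K fun j => bA (f j)) =
      (N : K)⁻¹ • (N • symOp (K := K) (tprod K fun j => bA (f j))) := by
    rw [← Nat.cast_smul_eq_nsmul K N, ← smul_assoc, smul_eq_mul, inv_mul_cancel₀ hNK, one_smul]
  rw [this]
  exact Subalgebra.smul_mem _ hmemN _

end Key

/-- Let `K` be a field with `char K = 0` or `char K > n`, `A` a
commutative `K`-algebra, `M ⊆ A` with `1 ∉ M` such that `{1} ∪ M` is a `K`-basis of `A`,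
and `F = K[T_w ∣ w ∈ M]` the polynomial algebra on indeterminates indexed by `M`.
The `K`-algebra homomorphism `φ : F → Tⁿ(A)` determined by `T_w ↦ [w]` is surjective
onto the invariant subalgebra `Tⁿ(A)^{Sₙ}`, i.e. its range is exactly `Tⁿ(A)^{Sₙ}`. -/
theorem multisym_surjective
    (hchar : ringChar K = 0 ∨ n < ringChar K)
    (M : Set A) (h1M : (1 : A) ∉ M)
    (bA : Module.Basis (Option M) K A)
    (hb1 : bA none = 1) (hbM : ∀ w : M, bA (some w) = (w : A)) :
    (MvPolynomial.aeval (fun w : M => bracket K A n (w : A)) :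
        MvPolynomial M K →ₐ[K] ⨂[K] _ : Fin n, A).range
      = symInvariants K A n := by
  classical
  set R := (MvPolynomial.aeval fun w : M => bracket K A n (w : A) :
      MvPolynomial M K →ₐ[K] ⨂[K] _ : Fin n, A).range with hRdef
  apply le_antisymm (range_le_symInvariants M)
  intro x hx
  -- the symmetrization of anything lies in the range
  have hsym : ∀ y : ⨂[K] _ : Fin n, A, symOp (K := K) y ∈ R := by
    intro y
    have htop : y ∈ Submodule.span K (Set.range (tprod K (s := fun _ : Fin n => A))) := by
      rw [PiTensorProduct.span_tprod_eq_top]; trivial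
    have hle : Submodule.span K (Set.range (tprod K (s := fun _ : Fin n => A))) ≤
        (Subalgebra.toSubmodule R).comap (symOp (K := K) (A := A) (n := n)) := by
      apply Submodule.span_le.mpr
      rintro y' ⟨v, rfl⟩
      have hspan := tprod_mem_span_basis bA Finset.univ (fun _ => none) v
        (fun j hj => absurd (Finset.mem_univ j) hj)
      have hle2 : Submodule.span K {z : ⨂[K] _ : Fin n, A |
          ∃ f' : Fin n → Option M, (∀ j ∉ Finset.univ, f' j = (none : Option M)) ∧
            z = tprod K fun j => bA (f' j)} ≤
          (Subalgebra.toSubmodule R).comap (symOp (K := K) (A := A) (n := n)) := by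
        apply Submodule.span_le.mpr
        rintro z ⟨f', _, rfl⟩
        apply key_lemma hchar M bA hb1 hbM n f'
        exact le_trans (Finset.card_filter_le _ _) (le_of_eq (by simp))
      exact hle2 hspan
    have := hle htop
    simpa using this
  have hfact : ((Nat.factorial n : ℕ) : K) ≠ 0 :=
    cast_ne_zero_of_dvd_factorial hchar dvd_rfl (Nat.factorial_ne_zero n)
  have hsx : symOp (K := K) x = (Nat.factorial n) • x := symOp_of_invariant x hx
  have hxe : x = ((Nat.factorial n : ℕ) : K)⁻¹ • symOp (K := K) x := by
    rw [hsx, ← Nat.cast_smul_eq_nsmul K (Nat.factorial n) x, ← smul_assoc, smul_eq_mul,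
      inv_mul_cancel₀ hfact, one_smul]
  rw [hxe]
  exact Subalgebra.smul_mem _ (hsym x) _


end
end

section
/- For any n×n matrices Y(1),…,Y(n+1) over any commutative ring, Σ_{π ∈ S_{n+1}} sign(π)·Tr^π = 0 (the fundamental trace identity of n×n matrices). -/
noncomputable section

variable {R : Type*} [CommRing R] {n : ℕ}

/-- For a cyclic permutation `c = (i₁ i₂ ⋯ i_d)` (written so that `i₁` is the smallest
element of its support and `i_{k+1} = c i_k`), the trace `Tr(Y(i₁) Y(i₂) ⋯ Y(i_d))` of the
product of the matrices `Y i` along the cycle.  (For the identity permutation, whose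
support is empty, the value is `1`; this case is never used below, since the factors of
a cycle decomposition have nonempty support.) -/
def cycleTrace (c : Equiv.Perm (Fin (n + 1))) (Y : Fin (n + 1) → Matrix (Fin n) (Fin n) R) :
    R :=
  if h : c.support.Nonempty then
    Matrix.trace
      (((List.range c.support.card).map fun k => Y ((c ^ k) (c.support.min' h))).prod)
  else 1

/-- `Tr^π = Tr(Y(i₁)⋯Y(i_d)) ⋯ Tr(Y(j₁)⋯Y(j_e))`, a product of traces, one factor for
each cycle of `π` (including one factor `Tr(Y s)` for each fixed point `s` of `π`,
i.e. each 1-cycle). -/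
def trPow (π : Equiv.Perm (Fin (n + 1))) (Y : Fin (n + 1) → Matrix (Fin n) (Fin n) R) :
    R :=
  (∏ c ∈ π.cycleFactorsFinset, cycleTrace c Y) * ∏ s ∈ π.supportᶜ, Matrix.trace (Y s)

private lemma prod_range_succ_apply (A : ℕ → Matrix (Fin n) (Fin n) R) (d : ℕ) (a b : Fin n) :
    ((List.range (d+1)).map A).prod a b
      = ∑ m, ((List.range d).map A).prod a m * A d m b := by
  rw [List.range_succ, List.map_append, List.prod_append]
  simp [Matrix.mul_apply]

private def snocEquiv (d : ℕ) : (Fin (d+1) → Fin n) ≃ ((Fin d → Fin n) × Fin n) where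
  toFun v := (Fin.init v, v (Fin.last _))
  invFun p := Fin.snoc p.1 p.2
  left_inv v := by simp
  right_inv p := by simp

private lemma sum_snoc (d : ℕ) (h : (Fin (d+1) → Fin n) → R) :
    ∑ v : Fin (d+1) → Fin n, h v = ∑ p : (Fin d → Fin n) × Fin n, h (Fin.snoc p.1 p.2) := by
  exact Fintype.sum_equiv (snocEquiv d) _ _ (by intro v; simp [snocEquiv])

private lemma NC (A : ℕ → Matrix (Fin n) (Fin n) R) :
    ∀ (d : ℕ) (a b : Fin n), ((List.range d).map A).prod a b
      = ∑ v : Fin (d+1) → Fin n,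
          if v 0 = a ∧ v (Fin.last d) = b then
            ∏ k : Fin d, A k (v k.castSucc) (v k.succ) else 0 := by
  intro d
  induction d with
  | zero =>
    intro a b
    simp only [List.range_zero, List.map_nil, List.prod_nil, Matrix.one_apply]
    have he : (∑ v : Fin 1 → Fin n, if v 0 = a ∧ v (Fin.last 0) = b then
            ∏ k : Fin 0, A k (v k.castSucc) (v k.succ) else 0)
        = ∑ m : Fin n, if m = a ∧ m = b then (1:R) else 0 := by
      refine Fintype.sum_equiv (Equiv.funUnique (Fin 1) (Fin n)) _ _ (fun v => ?_)
      have hv : v (Fin.last 0) = v 0 := congrArg v (Subsingleton.elim _ _)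
      simp [hv, Equiv.funUnique]
    rw [he]
    by_cases h : a = b
    · subst h; simp
    · rw [if_neg h]
      refine (Finset.sum_eq_zero fun m _ => ?_).symm
      rw [if_neg]
      rintro ⟨rfl, rfl⟩; exact h rfl
  | succ d ih =>
    intro a b
    rw [prod_range_succ_apply]
    simp_rw [ih, Finset.sum_mul, ite_mul, zero_mul]
    rw [Finset.sum_comm]
    rw [sum_snoc (d+1), Fintype.sum_prod_type]
    refine Finset.sum_congr rfl fun v _ => ?_
    have hsz : ∀ y : Fin n, (Fin.snoc v y : Fin (d+2) → Fin n) 0 = v 0 := fun y => by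
      have h := Fin.snoc_castSucc (α := fun _ : Fin (d+2) => Fin n) (i := (0 : Fin (d+1))) (x := y) (p := v)
      simpa using h
    by_cases hva : v 0 = a
    · simp only [hva, true_and]
      rw [Finset.sum_ite_eq Finset.univ (v (Fin.last d))
        (fun m => (∏ k : Fin d, A k (v k.castSucc) (v k.succ)) * A d m b)]
      simp only [Finset.mem_univ, if_true]
      simp only [hsz, hva, true_and, Fin.snoc_last]
      rw [Finset.sum_ite_eq' Finset.univ b
        (fun y => ∏ k : Fin (d+1), A (k : ℕ) ((Fin.snoc v y : Fin (d+2) → Fin n) k.castSucc)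
          ((Fin.snoc v y : Fin (d+2) → Fin n) k.succ))]
      simp only [Finset.mem_univ, if_true]
      rw [Fin.prod_univ_castSucc]
      simp [Fin.snoc_castSucc, Fin.succ_castSucc, Fin.snoc_last, Fin.succ_last, -Fin.castSucc_succ]
    · simp [hva, hsz]

private lemma snoc_succ (d : ℕ) (g : Fin (d+1) → Fin n) (k : Fin (d+1)) :
    (Fin.snoc g (g 0) : Fin (d+2) → Fin n) k.succ = g (k + 1) := by
  by_cases hk : k = Fin.last d
  · subst hk
    rw [Fin.succ_last, Fin.snoc_last, Fin.last_add_one]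
  · have hlt : (k : ℕ) < d := Fin.val_lt_last hk
    have h1 : k.succ = (k + 1).castSucc := by
      have hkl : k < Fin.last d := lt_of_le_of_ne (Fin.le_last k) hk
      apply Fin.ext
      rw [Fin.val_succ, Fin.coe_castSucc, Fin.val_add_one_of_lt hkl]
    rw [h1, Fin.snoc_castSucc]

private lemma traceCyc (A : ℕ → Matrix (Fin n) (Fin n) R) (d : ℕ) :
    Matrix.trace ((List.range (d+1)).map A).prod
      = ∑ g : Fin (d+1) → Fin n, ∏ k : Fin (d+1), A k (g k) (g (k + 1)) := by
  rw [Matrix.trace]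
  simp only [Matrix.diag]
  simp_rw [NC A (d+1)]
  rw [Finset.sum_comm]
  rw [sum_snoc (d+1) (h := fun v => ∑ a : Fin n,
    if v 0 = a ∧ v (Fin.last (d+1)) = a then
      ∏ k : Fin (d+1), A (k : ℕ) (v k.castSucc) (v k.succ) else 0)]
  rw [Fintype.sum_prod_type]
  refine Finset.sum_congr rfl fun g _ => ?_
  have hsz : ∀ y : Fin n, (Fin.snoc g y : Fin (d+2) → Fin n) 0 = g 0 := fun y => by
    have h := Fin.snoc_castSucc (α := fun _ : Fin (d+2) => Fin n) (i := (0 : Fin (d+1))) (x := y) (p := g)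
    simpa using h
  simp only [hsz, Fin.snoc_last]
  have hstep : ∀ y : Fin n, (∑ a : Fin n, if g 0 = a ∧ y = a then
      ∏ k : Fin (d+1), A (k : ℕ) ((Fin.snoc g y : Fin (d+2) → Fin n) k.castSucc)
        ((Fin.snoc g y : Fin (d+2) → Fin n) k.succ) else 0)
      = if y = g 0 then ∏ k : Fin (d+1), A (k : ℕ)
          ((Fin.snoc g y : Fin (d+2) → Fin n) k.castSucc)
          ((Fin.snoc g y : Fin (d+2) → Fin n) k.succ) else 0 := by
    intro y
    by_cases hy : y = g 0
    · subst hy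
      rw [if_pos rfl]
      rw [Finset.sum_eq_single (g 0)] <;> simp +contextual [eq_comm]
    · rw [if_neg hy]
      refine Finset.sum_eq_zero fun a _ => ?_
      rw [if_neg]
      rintro ⟨rfl, rfl⟩
      exact hy rfl
  simp_rw [hstep]
  rw [Finset.sum_ite_eq' Finset.univ (g 0)]
  simp only [Finset.mem_univ, if_true]
  refine Finset.prod_congr rfl fun k _ => ?_
  rw [Fin.snoc_castSucc, snoc_succ]

private def pinned (b₀ : Fin n) (s : Finset (Fin (n+1))) : Finset (Fin (n+1) → Fin n) :=
  Fintype.piFinset (fun i => if i ∈ s then Finset.univ else {b₀})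

private lemma mem_pinned {b₀ : Fin n} {s : Finset (Fin (n+1))} {f : Fin (n+1) → Fin n} :
    f ∈ pinned b₀ s ↔ ∀ i ∉ s, f i = b₀ := by
  simp only [pinned, Fintype.mem_piFinset]
  constructor
  · intro h i hi
    have := h i
    rw [if_neg hi] at this
    simpa using this
  · intro h i
    by_cases hi : i ∈ s
    · simp [hi]
    · simp [hi, h i hi]

private def DD (b₀ : Fin n) (Y : Fin (n+1) → Matrix (Fin n) (Fin n) R)
    (s : Finset (Fin (n+1))) (π : Equiv.Perm (Fin (n+1))) : R :=
  ∑ f ∈ pinned b₀ s, ∏ i ∈ s, Y i (f i) (f (π i))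

private lemma DD_univ (b₀ : Fin n) (Y : Fin (n+1) → Matrix (Fin n) (Fin n) R)
    (π : Equiv.Perm (Fin (n+1))) :
    DD b₀ Y Finset.univ π = ∑ f : Fin (n+1) → Fin n, ∏ i, Y i (f i) (f (π i)) := by
  rw [DD]
  congr 1
  ext f
  simp [mem_pinned]

private lemma DD_congr (b₀ : Fin n) (Y : Fin (n+1) → Matrix (Fin n) (Fin n) R)
    {s : Finset (Fin (n+1))} {π τ : Equiv.Perm (Fin (n+1))} (h : ∀ i ∈ s, π i = τ i) :
    DD b₀ Y s π = DD b₀ Y s τ :=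
  Finset.sum_congr rfl fun f _ => Finset.prod_congr rfl fun i hi => by rw [h i hi]

private lemma DD_singleton (b₀ : Fin n) (Y : Fin (n+1) → Matrix (Fin n) (Fin n) R)
    {π : Equiv.Perm (Fin (n+1))} {s : Fin (n+1)} (hπ : π s = s) :
    DD b₀ Y {s} π = Matrix.trace (Y s) := by
  rw [DD, Matrix.trace]
  simp only [Finset.prod_singleton, hπ, Matrix.diag]
  refine Finset.sum_nbij' (fun f => f s) (fun a => fun i => if i = s then a else b₀)
    (fun f _ => Finset.mem_univ _) (fun a _ => ?_) (fun f hf => ?_) (fun a _ => by simp) (fun f _ => rfl)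
  · rw [mem_pinned]
    intro i hi
    rw [if_neg]
    simpa using hi
  · funext i
    by_cases hi : i = s
    · subst hi; simp
    · rw [if_neg hi]
      exact ((mem_pinned.mp hf) i (by simpa using hi)).symm

private lemma DD_union (b₀ : Fin n) (Y : Fin (n+1) → Matrix (Fin n) (Fin n) R)
    {s t : Finset (Fin (n+1))} {π : Equiv.Perm (Fin (n+1))} (hst : Disjoint s t)
    (hπs : ∀ i ∈ s, π i ∈ s) (hπt : ∀ i ∈ t, π i ∈ t) :
    DD b₀ Y (s ∪ t) π = DD b₀ Y s π * DD b₀ Y t π := by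
  rw [DD, DD, DD, Finset.sum_mul_sum, ← Finset.sum_product']
  refine Finset.sum_nbij'
    (fun f => (fun i => if i ∈ s then f i else b₀, fun i => if i ∈ t then f i else b₀))
    (fun p => fun i => if i ∈ s then p.1 i else p.2 i)
    (fun f hf => ?_) (fun p hp => ?_) (fun f hf => ?_) (fun p hp => ?_) (fun f hf => ?_)
  · rw [Finset.mem_product]
    constructor <;> · rw [mem_pinned]; intro i hi; dsimp only; rw [if_neg hi]
  · rw [mem_pinned]
    intro i hi
    rw [Finset.mem_union] at hi
    push_neg at hi
    rw [if_neg hi.1]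
    exact (mem_pinned.mp (Finset.mem_product.mp hp).2) i hi.2
  · funext i
    dsimp only
    by_cases his : i ∈ s
    · simp [his]
    · by_cases hit : i ∈ t
      · simp [his, hit]
      · simp only [his, hit, if_false]
        exact ((mem_pinned.mp hf) i (by simp [his, hit])).symm
  · rw [Finset.mem_product] at hp
    refine Prod.ext ?_ ?_ <;> funext i <;> simp only []
    · by_cases his : i ∈ s
      · simp only [his, if_true]
      · simp only [his, if_false]
        exact ((mem_pinned.mp hp.1) i his).symm
    · by_cases hit : i ∈ t
      · have his : i ∉ s := Finset.disjoint_right.mp hst hit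
        simp only [his, hit, if_true, if_false]
      · simp only [hit, if_false]
        exact ((mem_pinned.mp hp.2) i hit).symm
  · rw [Finset.prod_union hst]
    dsimp only
    congr 1
    · refine Finset.prod_congr rfl fun i hi => ?_
      rw [if_pos hi, if_pos (hπs i hi)]
    · refine Finset.prod_congr rfl fun i hi => ?_
      rw [if_pos hi, if_pos (hπt i hi)]

private lemma pinned_empty (b₀ : Fin n) :
    pinned b₀ (∅ : Finset (Fin (n+1))) = {fun _ => b₀} := by
  ext f
  rw [Finset.mem_singleton, mem_pinned]
  simp [funext_iff]

private lemma DD_empty (b₀ : Fin n) (Y : Fin (n+1) → Matrix (Fin n) (Fin n) R)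
    (π : Equiv.Perm (Fin (n+1))) : DD b₀ Y ∅ π = 1 := by
  rw [DD, pinned_empty]
  simp

private lemma DD_biUnion {ι : Type*} [DecidableEq ι] (b₀ : Fin n)
    (Y : Fin (n+1) → Matrix (Fin n) (Fin n) R) (π : Equiv.Perm (Fin (n+1)))
    (F : Finset ι) (B : ι → Finset (Fin (n+1)))
    (hd : ∀ a ∈ F, ∀ b ∈ F, a ≠ b → Disjoint (B a) (B b))
    (hπ : ∀ a ∈ F, ∀ i ∈ B a, π i ∈ B a) :
    DD b₀ Y (F.biUnion B) π = ∏ a ∈ F, DD b₀ Y (B a) π := by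
  induction F using Finset.induction_on with
  | empty => simp [DD_empty]
  | @insert a F' ha ih =>
    rw [Finset.biUnion_insert, Finset.prod_insert ha]
    rw [DD_union b₀ Y ?_ ?_ ?_]
    · rw [ih (fun x hx y hy hxy => hd x (Finset.mem_insert_of_mem hx) y
        (Finset.mem_insert_of_mem hy) hxy)
        (fun x hx => hπ x (Finset.mem_insert_of_mem hx))]
    · rw [Finset.disjoint_biUnion_right]
      intro b hb
      exact hd a (Finset.mem_insert_self a F') b (Finset.mem_insert_of_mem hb)
        (fun h => ha (h ▸ hb))
    · exact hπ a (Finset.mem_insert_self a F')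
    · intro i hi
      rw [Finset.mem_biUnion] at hi ⊢
      obtain ⟨b, hb, hib⟩ := hi
      exact ⟨b, hb, hπ b (Finset.mem_insert_of_mem hb) i hib⟩

private lemma percycle (b₀ : Fin n) (Y : Fin (n+1) → Matrix (Fin n) (Fin n) R)
    {π c : Equiv.Perm (Fin (n+1))} (hc : c ∈ π.cycleFactorsFinset) :
    DD b₀ Y c.support c = cycleTrace c Y := by
  have hcyc : c.IsCycle := (Equiv.Perm.mem_cycleFactorsFinset_iff.mp hc).1
  have hne : c.support.Nonempty := hcyc.nonempty_support
  set x := c.support.min' hne with hxdef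
  have hxmem : x ∈ c.support := Finset.min'_mem _ _
  have hord : orderOf c = c.support.card := hcyc.orderOf
  have hco : c.IsCycleOn c.support :=
    Equiv.Perm.isCycleOn_support_of_mem_cycleFactorsFinset
      (Equiv.Perm.mem_cycleFactorsFinset_iff.mpr ⟨hcyc, fun a _ => rfl⟩)
  have key1 : ∀ i ∈ c.support, ∃ k, k < c.support.card ∧ (c ^ k) x = i := by
    intro i hi
    obtain ⟨k, hk, hck⟩ := (hcyc.sameCycle (Equiv.Perm.mem_support.mp hxmem)
      (Equiv.Perm.mem_support.mp hi)).exists_pow_eq'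
    exact ⟨k, hord ▸ hk, hck⟩
  have hex : ∀ i, i ∈ c.support → ∃ k, (c ^ k) x = i := by
    intro i hi
    obtain ⟨k, _, hck⟩ := key1 i hi
    exact ⟨k, hck⟩
  have key2 : ∀ k l : ℕ, k < c.support.card → l < c.support.card →
      (c ^ k) x = (c ^ l) x → k = l := by
    intro k l hk hl h
    have := (hco.pow_apply_eq_pow_apply hxmem).mp h
    rw [Nat.ModEq] at this
    rwa [Nat.mod_eq_of_lt hk, Nat.mod_eq_of_lt hl] at this
  have key3 : ∀ k l : ℕ, k ≡ l [MOD c.support.card] → (c ^ k) x = (c ^ l) x :=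
    fun k l h => (hco.pow_apply_eq_pow_apply hxmem).mpr h
  have himg : c.support = (Finset.range c.support.card).image (fun k => (c ^ k) x) := by
    ext i
    rw [Finset.mem_image]
    constructor
    · intro hi
      obtain ⟨k, hk, hck⟩ := key1 i hi
      exact ⟨k, Finset.mem_range.mpr hk, hck⟩
    · rintro ⟨k, -, rfl⟩
      exact Equiv.Perm.pow_apply_mem_support.mpr hxmem
  obtain ⟨e, he⟩ : ∃ e, c.support.card = e + 1 :=
    ⟨c.support.card - 1, (Nat.succ_pred_eq_of_pos (Finset.card_pos.mpr hne)).symm⟩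
  rw [cycleTrace, dif_pos hne, ← hxdef]
  rw [show ((List.range c.support.card).map fun k => Y ((c ^ k) x)).prod
      = ((List.range (e+1)).map fun k => Y ((c ^ k) x)).prod from by rw [he]]
  rw [traceCyc (fun k => Y ((c ^ k) x)) e]
  rw [DD]
  refine Finset.sum_nbij'
    (fun f => fun k : Fin (e+1) => f ((c ^ (k : ℕ)) x))
    (fun g => fun i => if hi : i ∈ c.support then
        g ⟨Nat.find (hex i hi), by
          obtain ⟨k, hk, hck⟩ := key1 i hi
          rw [← he]
          exact lt_of_le_of_lt (Nat.find_min' (hex i hi) hck) hk⟩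
      else b₀)
    (fun f _ => Finset.mem_univ _) (fun g _ => ?_) (fun f hf => ?_) (fun g _ => ?_)
    (fun f hf => ?_)
  · rw [mem_pinned]
    intro i hi
    rw [dif_neg hi]
  · funext i
    dsimp only
    by_cases hi : i ∈ c.support
    · rw [dif_pos hi]
      exact congrArg f (Nat.find_spec (hex i hi))
    · rw [dif_neg hi]
      exact ((mem_pinned.mp hf) i hi).symm
  · funext k
    dsimp only
    have hmem : (c ^ (k : ℕ)) x ∈ c.support := Equiv.Perm.pow_apply_mem_support.mpr hxmem
    rw [dif_pos hmem]
    congr 1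
    apply Fin.ext
    dsimp only
    refine key2 _ _ ?_ (by omega) (Nat.find_spec (hex _ hmem))
    obtain ⟨l, hl, hcl⟩ := key1 _ hmem
    exact lt_of_le_of_lt (Nat.find_min' (hex _ hmem) hcl) hl
  · rw [himg, Finset.prod_image (fun k hk l hl h =>
      key2 k l (Finset.mem_range.mp hk) (Finset.mem_range.mp hl) h)]
    rw [show c.support.card = e + 1 from he,
      ← Fin.prod_univ_eq_prod_range (fun k => Y ((c ^ k) x) (f ((c ^ k) x)) (f (c ((c ^ k) x)))) (e+1)]
    refine Finset.prod_congr rfl fun k _ => ?_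
    dsimp only
    have h1 : c ((c ^ (k:ℕ)) x) = (c ^ ((k:ℕ)+1)) x := by
      rw [← Equiv.Perm.mul_apply, ← pow_succ']
    rw [h1]
    congr 1
    apply congrArg f
    apply key3
    rw [he, Fin.val_add, Fin.val_one']
    exact ((Nat.ModEq.add_left (k:ℕ) (Nat.mod_modEq 1 (e+1))).symm).trans
      (Nat.mod_modEq ((k:ℕ) + 1 % (e+1)) (e+1)).symm

private lemma trPow_eq_sum (b₀ : Fin n) (Y : Fin (n+1) → Matrix (Fin n) (Fin n) R)
    (π : Equiv.Perm (Fin (n+1))) :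
    trPow π Y = ∑ f : Fin (n+1) → Fin n, ∏ i, Y i (f i) (f (π i)) := by
  rw [← DD_univ b₀ Y π, ← Finset.union_compl π.support,
    DD_union b₀ Y disjoint_compl_right
      (fun i hi => Equiv.Perm.apply_mem_support.mpr hi)
      (fun i hi => by
        rw [Finset.mem_compl, Equiv.Perm.notMem_support] at hi
        rw [Finset.mem_compl, Equiv.Perm.notMem_support]
        simp only [hi])]
  rw [trPow]
  congr 1
  · have hsupp : π.support = π.cycleFactorsFinset.biUnion Equiv.Perm.support := by
      ext i
      rw [Finset.mem_biUnion]
      exact Equiv.Perm.mem_support_iff_mem_support_of_mem_cycleFactorsFinset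
    have hb := DD_biUnion b₀ Y π π.cycleFactorsFinset Equiv.Perm.support
      (fun a ha b hb hab => Equiv.Perm.Disjoint.disjoint_support
        ((Equiv.Perm.cycleFactorsFinset_pairwise_disjoint π) ha hb hab))
      (fun a ha i hi => by
        rw [← (Equiv.Perm.mem_cycleFactorsFinset_iff.mp ha).2 i hi]
        exact Equiv.Perm.apply_mem_support.mpr hi)
    rw [← hsupp] at hb
    rw [hb]
    refine Finset.prod_congr rfl fun c hcf => ?_
    rw [← percycle b₀ Y hcf]
    exact DD_congr b₀ Y (fun i hi => (Equiv.Perm.mem_cycleFactorsFinset_iff.mp hcf).2 i hi)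
  · have hb := DD_biUnion b₀ Y π π.supportᶜ (fun a => {a})
      (fun a _ b _ hab => Finset.disjoint_singleton.mpr hab)
      (fun a ha i hi => by
        rw [Finset.mem_singleton] at hi ⊢
        subst hi
        rw [Finset.mem_compl, Equiv.Perm.notMem_support] at ha
        rw [ha])
    rw [Finset.biUnion_singleton_eq_self] at hb
    rw [hb]
    refine Finset.prod_congr rfl fun a ha => ?_
    rw [Finset.mem_compl, Equiv.Perm.notMem_support] at ha
    exact (DD_singleton b₀ Y ha).symm

private lemma cancel (Y : Fin (n+1) → Matrix (Fin n) (Fin n) R) (f : Fin (n+1) → Fin n) :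
    ∑ π : Equiv.Perm (Fin (n+1)),
      (Equiv.Perm.sign π : ℤ) • ∏ i, Y i (f i) (f (π i)) = 0 := by
  obtain ⟨a, b, hab, hfab⟩ : ∃ a b, a ≠ b ∧ f a = f b :=
    Fintype.exists_ne_map_eq_of_card_lt f (by simp)
  have hswap : ∀ j, f (Equiv.swap a b j) = f j := by
    intro j
    by_cases hja : j = a
    · subst hja; rw [Equiv.swap_apply_left]; exact hfab.symm
    · by_cases hjb : j = b
      · subst hjb; rw [Equiv.swap_apply_right]; exact hfab
      · rw [Equiv.swap_apply_of_ne_of_ne hja hjb]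
  refine Finset.sum_involution (fun π _ => Equiv.swap a b * π) (fun π _ => ?_)
    (fun π _ _ => ?_) (fun π _ => Finset.mem_univ _) (fun π _ => ?_)
  · have hsgn : ((Equiv.Perm.sign (Equiv.swap a b * π) : ℤ)) = -(Equiv.Perm.sign π : ℤ) := by
      rw [Equiv.Perm.sign_mul, Equiv.Perm.sign_swap hab]
      simp
    have hprod : ∏ i, Y i (f i) (f ((Equiv.swap a b * π) i)) = ∏ i, Y i (f i) (f (π i)) :=
      Finset.prod_congr rfl fun i _ => by rw [Equiv.Perm.mul_apply, hswap]
    rw [hsgn, hprod, ← add_smul]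
    simp
  · intro h
    have h' : Equiv.swap a b * π = π := h
    have h1 : Equiv.swap a b = 1 := by
      have : Equiv.swap a b * π = 1 * π := by rw [h', one_mul]
      exact mul_right_cancel this
    exact hab (Equiv.swap_eq_one_iff.mp h1)
  · show Equiv.swap a b * (Equiv.swap a b * π) = π
    rw [← mul_assoc, Equiv.swap_mul_self, one_mul]

/-- The fundamental trace identity of `n × n` matrices: for any
`n × n` matrices `Y 1, …, Y (n+1)` over any commutative ring,
`Σ_{π ∈ S_{n+1}} sign(π) · Tr^π = 0`. -/
theorem fundamental_trace_identity (Y : Fin (n + 1) → Matrix (Fin n) (Fin n) R) :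
    ∑ π : Equiv.Perm (Fin (n + 1)), (Equiv.Perm.sign π : ℤ) • trPow π Y = 0 := by
  rcases Nat.eq_zero_or_pos n with hn | hn
  · subst hn
    haveI : Subsingleton (Fin (0+1)) := Fin.subsingleton_one
    haveI : Subsingleton (Equiv.Perm (Fin (0+1))) :=
      ⟨fun x y => Equiv.ext fun i => Subsingleton.elim _ _⟩
    rw [Fintype.sum_subsingleton _ 1]
    simp [trPow, Matrix.trace]
  · have b₀ : Fin n := ⟨0, hn⟩
    calc ∑ π : Equiv.Perm (Fin (n+1)), (Equiv.Perm.sign π : ℤ) • trPow π Y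
        = ∑ π : Equiv.Perm (Fin (n+1)), ∑ f : Fin (n+1) → Fin n,
            (Equiv.Perm.sign π : ℤ) • ∏ i, Y i (f i) (f (π i)) := by
          refine Finset.sum_congr rfl fun π _ => ?_
          rw [trPow_eq_sum b₀ Y π, Finset.smul_sum]
      _ = ∑ f : Fin (n+1) → Fin n, ∑ π : Equiv.Perm (Fin (n+1)),
            (Equiv.Perm.sign π : ℤ) • ∏ i, Y i (f i) (f (π i)) := Finset.sum_comm
      _ = 0 := Finset.sum_eq_zero fun f _ => cancel Y f

end
end

section
/- If b is a nonzero homogeneous element of A of positive degree with deg(b) < (n+1)q, then [b] is indecomposable in B := T^n(A)^{S_n}, i.e. [b] ∉ (B_+)², where B carries the grading induced from A and B_+ is its ideal of positive-degree elements. -/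
open scoped TensorProduct
open PiTensorProduct

noncomputable section

variable (K : Type*) [Field K] (A : Type*) [CommRing A] [Algebra K A] (n : ℕ)

variable (𝒜 : ℕ → Submodule K A)

/-- The degree-`d` homogeneous component of the grading on `Tⁿ(A)` induced by the
grading `𝒜` of `A` (so that `deg (v₁ ⊗ ⋯ ⊗ vₙ) = deg v₁ + ⋯ + deg vₙ` for homogeneous
`vᵢ`). -/
def gradePiece (d : ℕ) : Submodule K (⨂[K] _ : Fin n, A) :=
  Submodule.span K {t | ∃ (e : Fin n → ℕ) (v : Fin n → A),
    (∀ i, v i ∈ 𝒜 (e i)) ∧ (∑ i, e i) = d ∧ t = tprod K v}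

/-- `B₊`, the ideal of positive-degree elements of `B = Tⁿ(A)^{Sₙ}`, viewed as a
`K`-submodule of `Tⁿ(A)`: the invariant elements of positive degree. -/
def posPart : Submodule K (⨂[K] _ : Fin n, A) :=
  Subalgebra.toSubmodule (symInvariants K A n) ⊓
    ⨆ d : ℕ, ⨆ _ : 0 < d, gradePiece K A n 𝒜 d

/-- `(B₊)²`, viewed as a `K`-submodule of `Tⁿ(A)`: the span of all products of two
positive-degree elements of `B = Tⁿ(A)^{Sₙ}`. -/
def posPartSq : Submodule K (⨂[K] _ : Fin n, A) :=
  Submodule.span K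
    {t | ∃ a ∈ posPart K A n 𝒜, ∃ b ∈ posPart K A n 𝒜, t = a * b}

namespace BracketAux
open Finset

lemma alt_sum_step (n : ℕ) (f : ℕ → ℤ) :
    ∑ m ∈ range (n + 2), (-1) ^ m * ((n+1).choose m : ℤ) * f m
      = - ∑ m ∈ range (n + 1), (-1) ^ m * (n.choose m : ℤ) * (f (m+1) - f m) := by
  have h1 : ∑ m ∈ range (n + 2), (-1:ℤ) ^ m * ((n+1).choose m : ℤ) * f m
      = (∑ i ∈ range (n+1), (-1:ℤ) ^ (i+1) * ((n+1).choose (i+1) : ℤ) * f (i+1)) + f 0 := by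
    rw [Finset.sum_range_succ']
    simp
  have h2 : ∀ i : ℕ, ((n+1).choose (i+1) : ℤ) = (n.choose i : ℤ) + (n.choose (i+1) : ℤ) := by
    intro i; exact_mod_cast congrArg (Nat.cast (R := ℤ)) (Nat.choose_succ_succ (n) (i))
  have h3 : ∑ i ∈ range (n+1), (-1:ℤ) ^ (i+1) * ((n).choose (i+1) : ℤ) * f (i+1)
      = (∑ m ∈ range (n+1), (-1:ℤ) ^ m * (n.choose m : ℤ) * f m) - f 0 := by
    have h5 : ∑ m ∈ range (n+2), (-1:ℤ) ^ m * (n.choose m : ℤ) * f m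
        = (∑ i ∈ range (n+1), (-1:ℤ) ^ (i+1) * ((n).choose (i+1) : ℤ) * f (i+1)) + f 0 := by
      rw [Finset.sum_range_succ']
      simp
    have h4 : ∑ m ∈ range (n+2), (-1:ℤ) ^ m * (n.choose m : ℤ) * f m
        = ∑ m ∈ range (n+1), (-1:ℤ) ^ m * (n.choose m : ℤ) * f m := by
      rw [Finset.sum_range_succ]
      simp [Nat.choose_succ_self]
    omega
  calc ∑ m ∈ range (n + 2), (-1:ℤ) ^ m * ((n+1).choose m : ℤ) * f m
      = (∑ i ∈ range (n+1), ((-1:ℤ) ^ (i+1) * ((n).choose i : ℤ) * f (i+1)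
          + (-1:ℤ) ^ (i+1) * ((n).choose (i+1) : ℤ) * f (i+1))) + f 0 := by
        rw [h1]; congr 1; apply Finset.sum_congr rfl; intro i _; rw [h2]; try ring
    _ = (∑ i ∈ range (n+1), (-1:ℤ) ^ (i+1) * ((n).choose i : ℤ) * f (i+1))
          + ((∑ m ∈ range (n+1), (-1:ℤ) ^ m * (n.choose m : ℤ) * f m) - f 0) + f 0 := by
        rw [Finset.sum_add_distrib, h3]; try ring
    _ = - ∑ m ∈ range (n + 1), (-1) ^ m * (n.choose m : ℤ) * (f (m+1) - f m) := by
        rw [← Finset.sum_neg_distrib]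
        rw [show (∑ i ∈ range (n+1), (-1:ℤ) ^ (i+1) * ((n).choose i : ℤ) * f (i+1))
          + ((∑ m ∈ range (n+1), (-1:ℤ) ^ m * (n.choose m : ℤ) * f m) - f 0) + f 0
          = ∑ i ∈ range (n+1), ((-1:ℤ) ^ (i+1) * ((n).choose i : ℤ) * f (i+1)
              + (-1:ℤ) ^ i * (n.choose i : ℤ) * f i) from by
            rw [Finset.sum_add_distrib]; ring]
        apply Finset.sum_congr rfl; intro i _; ring

lemma alt_sum_choose_poly (n : ℕ) : ∀ a b : ℕ, a + b < n →
    ∑ m ∈ range (n + 1), (-1:ℤ) ^ m * (n.choose m : ℤ) * ((m.choose a : ℤ) * (m.choose b : ℤ)) = 0 := by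
  induction n with
  | zero => intro a b h; omega
  | succ n ih =>
    intro a b h
    rw [show n + 1 + 1 = n + 2 from rfl, alt_sum_step n (fun m => (m.choose a : ℤ) * (m.choose b : ℤ))]
    match a, b with
    | 0, 0 =>
      simp
    | 0, b+1 =>
      have key : ∀ m : ℕ, ((m+1).choose 0 : ℤ) * ((m+1).choose (b+1) : ℤ)
          - (m.choose 0 : ℤ) * (m.choose (b+1) : ℤ) = (m.choose b : ℤ) * (m.choose 0 : ℤ) := by
        intro m
        have h2 := Nat.choose_succ_succ m b
        push_cast [h2, Nat.choose_zero_right]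
        ring
      rw [Finset.sum_congr rfl fun m _ => by rw [key m]]
      rw [ih b 0 (by omega)]
      ring
    | a+1, 0 =>
      have key : ∀ m : ℕ, ((m+1).choose (a+1) : ℤ) * ((m+1).choose 0 : ℤ)
          - (m.choose (a+1) : ℤ) * (m.choose 0 : ℤ) = (m.choose a : ℤ) * (m.choose 0 : ℤ) := by
        intro m
        have h2 := Nat.choose_succ_succ m a
        push_cast [h2, Nat.choose_zero_right]
        ring
      rw [Finset.sum_congr rfl fun m _ => by rw [key m]]
      rw [ih a 0 (by omega)]
      ring
    | a+1, b+1 =>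
      have key : ∀ m : ℕ, ((m+1).choose (a+1) : ℤ) * ((m+1).choose (b+1) : ℤ)
          - (m.choose (a+1) : ℤ) * (m.choose (b+1) : ℤ)
          = (m.choose (a+1) : ℤ) * (m.choose b : ℤ)
            + (m.choose a : ℤ) * (m.choose (b+1) : ℤ)
            + (m.choose a : ℤ) * (m.choose b : ℤ) := by
        intro m
        have h1 := Nat.choose_succ_succ m a
        have h2 := Nat.choose_succ_succ m b
        push_cast [h1, h2]
        ring
      rw [Finset.sum_congr rfl fun m _ => by rw [key m]]
      have expand : ∀ m : ℕ, (-1:ℤ) ^ m * (n.choose m : ℤ) *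
          ((m.choose (a+1) : ℤ) * (m.choose b : ℤ)
            + (m.choose a : ℤ) * (m.choose (b+1) : ℤ)
            + (m.choose a : ℤ) * (m.choose b : ℤ))
          = (-1:ℤ) ^ m * (n.choose m : ℤ) * ((m.choose (a+1) : ℤ) * (m.choose b : ℤ))
            + (-1:ℤ) ^ m * (n.choose m : ℤ) * ((m.choose a : ℤ) * (m.choose (b+1) : ℤ))
            + (-1:ℤ) ^ m * (n.choose m : ℤ) * ((m.choose a : ℤ) * (m.choose b : ℤ)) := by
        intro m; ring
      rw [Finset.sum_congr rfl fun m _ => expand m, Finset.sum_add_distrib,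
        Finset.sum_add_distrib, ih (a+1) b (by omega), ih a (b+1) (by omega),
        ih a b (by omega)]
      ring

lemma choose_pred_eq_alt (s : ℕ) : ∀ m : ℕ, 0 < m →
    ((m - 1).choose s : ℤ) = ∑ j ∈ range (s + 1), (-1:ℤ) ^ (s - j) * (m.choose j : ℤ) := by
  induction s with
  | zero => intro m hm; simp
  | succ s ih =>
    intro m hm
    rw [Finset.sum_range_succ]
    have h1 : ∀ j ∈ range (s+1), (-1:ℤ) ^ (s + 1 - j) * (m.choose j : ℤ)
        = -((-1:ℤ) ^ (s - j) * (m.choose j : ℤ)) := by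
      intro j hj
      rw [mem_range] at hj
      rw [show s + 1 - j = (s - j) + 1 from by omega, pow_succ]
      ring
    rw [Finset.sum_congr rfl h1, Finset.sum_neg_distrib, ← ih m hm]
    obtain ⟨m', rfl⟩ : ∃ m', m = m' + 1 := ⟨m - 1, by omega⟩
    simp only [Nat.add_sub_cancel, Nat.sub_self, pow_zero, mul_one, Nat.succ_eq_add_one,
      Nat.add_comm 1 s]
    push_cast
    have h2 : (((m' + 1)).choose (s + 1) : ℤ) = (m'.choose s : ℤ) + (m'.choose (s + 1) : ℤ) := by
      exact_mod_cast Nat.choose_succ_succ m' s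
    rw [h2]; ring

lemma dagger (n s t : ℕ) (hs : 1 ≤ s) (ht : 1 ≤ t) (hst : s + t ≤ n) :
    ∑ m ∈ range (n + 1), (-1:ℤ) ^ m * (n.choose m : ℤ)
      * (((m-1).choose (s-1) : ℤ) * (m.choose t : ℤ)) = 0 := by
  obtain ⟨s', rfl⟩ : ∃ s', s = s' + 1 := ⟨s - 1, by omega⟩
  have key : ∀ m : ℕ, (-1:ℤ) ^ m * (n.choose m : ℤ) * (((m-1).choose (s'+1-1) : ℤ) * (m.choose t : ℤ))
      = ∑ j ∈ range (s' + 1), (-1:ℤ) ^ (s' - j) *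
          ((-1:ℤ) ^ m * (n.choose m : ℤ) * ((m.choose j : ℤ) * (m.choose t : ℤ))) := by
    intro m
    rcases Nat.eq_zero_or_pos m with rfl | hm
    · have h0 : (Nat.choose 0 t : ℤ) = 0 := by
        rw [Nat.choose_eq_zero_of_lt (by omega)]; push_cast; try ring
      simp [h0]
    · rw [show s' + 1 - 1 = s' from rfl, choose_pred_eq_alt s' m hm, Finset.sum_mul,
        Finset.mul_sum]
      apply Finset.sum_congr rfl; intro j _; ring
  rw [Finset.sum_congr rfl fun m _ => key m, Finset.sum_comm]
  apply Finset.sum_eq_zero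
  intro j hj
  rw [mem_range] at hj
  rw [← Finset.mul_sum, alt_sum_choose_poly n j t (by omega), mul_zero]


variable {K : Type*} [Field K]

lemma Kident (n s t : ℕ) (hK : ∀ m : ℕ, 1 ≤ m → m ≤ n → (m : K) ≠ 0)
    (hs : 1 ≤ s) (ht : 1 ≤ t) (hst : s + t ≤ n) :
    ∑ m ∈ range (n + 1),
      ((-1:K) ^ (m+1) * (m : K)⁻¹ * (n.choose m : K)) * ((m.choose s : K) * (m.choose t : K))
      = 0 := by
  have hsK : (s : K) ≠ 0 := hK s hs (by omega)
  have term : ∀ m ∈ range (n+1),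
      ((-1:K) ^ (m+1) * (m : K)⁻¹ * (n.choose m : K)) * ((m.choose s : K) * (m.choose t : K))
      = (-(s : K)⁻¹) * ((((-1:ℤ) ^ m * (n.choose m : ℤ)
          * (((m-1).choose (s-1) : ℤ) * (m.choose t : ℤ))) : ℤ) : K) := by
    intro m hm
    rcases Nat.eq_zero_or_pos m with rfl | hm0
    · simp [Nat.choose_eq_zero_of_lt (show 0 < t from ht)]
    · have hmK : (m : K) ≠ 0 := hK m hm0 (by rw [mem_range] at hm; omega)
      have hnat : s * m.choose s = m * (m-1).choose (s-1) := by
        obtain ⟨m', rfl⟩ : ∃ m', m = m'+1 := ⟨m-1, by omega⟩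
        obtain ⟨s', rfl⟩ : ∃ s', s = s'+1 := ⟨s-1, by omega⟩
        simp only [Nat.add_sub_cancel]
        rw [mul_comm, ← Nat.add_one_mul_choose_eq m' s']
      have hc : (s : K) * (m.choose s : K) = (m : K) * (((m-1).choose (s-1) : ℕ) : K) := by
        exact_mod_cast congrArg (Nat.cast (R := K)) hnat
      have hKid : (m : K)⁻¹ * (m.choose s : K) = (s : K)⁻¹ * (((m-1).choose (s-1) : ℕ) : K) := by
        field_simp
        linear_combination hc
      push_cast
      linear_combination ((-1:K) ^ (m+1) * (n.choose m : K) * (m.choose t : K)) * hKid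
  rw [Finset.sum_congr rfl term, ← Finset.mul_sum]
  rw [show ∑ m ∈ range (n+1), ((((-1:ℤ) ^ m * (n.choose m : ℤ)
          * (((m-1).choose (s-1) : ℤ) * (m.choose t : ℤ))) : ℤ) : K)
      = (((∑ m ∈ range (n+1), ((-1:ℤ) ^ m * (n.choose m : ℤ)
          * (((m-1).choose (s-1) : ℤ) * (m.choose t : ℤ)))) : ℤ) : K) from by push_cast; ring]
  rw [dagger n s t hs ht hst]
  simp

lemma Kalpha (n : ℕ) (hn : 1 ≤ n) (hK : ∀ m : ℕ, 1 ≤ m → m ≤ n → (m : K) ≠ 0) :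
    ∑ m ∈ range (n + 1), ((-1:K) ^ (m+1) * (m : K)⁻¹ * (n.choose m : K)) * (m : K) = 1 := by
  have h0 : ∀ m ∈ range (n+1),
      ((-1:K) ^ (m+1) * (m : K)⁻¹ * (n.choose m : K)) * (m : K)
      = -((-1:K) ^ m * (n.choose m : K)) + (if m = 0 then 1 else 0) := by
    intro m hm
    rcases Nat.eq_zero_or_pos m with rfl | hm0
    · simp
    · have hmK : (m : K) ≠ 0 := hK m hm0 (by rw [mem_range] at hm; omega)
      rw [if_neg (by omega)]
      field_simp
      ring
  rw [Finset.sum_congr rfl h0, Finset.sum_add_distrib, Finset.sum_neg_distrib]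
  have h1 : ∑ m ∈ range (n+1), ((-1:K) ^ m * (n.choose m : K)) = 0 := by
    have := Int.alternating_sum_range_choose_of_ne (show n ≠ 0 by omega)
    have h2 : (((∑ m ∈ range (n+1), ((-1:ℤ) ^ m * (n.choose m : ℤ))) : ℤ) : K) = 0 := by
      rw [this]; simp
    rw [← h2]
    push_cast
    ring
  rw [h1, Finset.sum_ite_eq' (range (n+1)) 0]
  simp

end BracketAux

namespace BracketAux

section graded
variable [GradedAlgebra 𝒜]

/-- Projection onto the degree-0 component, as a `K`-linear endomap of `A`. -/
def eps : A →ₗ[K] A where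
  toFun a := (DirectSum.decompose 𝒜 a 0 : A)
  map_add' x y := by simp
  map_smul' c x := by
    show ((DirectSum.decompose 𝒜 (c • x)) 0 : A) = c • ((DirectSum.decompose 𝒜 x) 0 : A)
    rw [DirectSum.decompose_smul]
    rfl

lemma eps_apply (a : A) : eps K A 𝒜 a = (DirectSum.decompose 𝒜 a 0 : A) := rfl

lemma eps_eq_proj (a : A) : eps K A 𝒜 a = GradedRing.projZeroRingHom 𝒜 a := rfl

lemma eps_one : eps K A 𝒜 1 = 1 := by rw [eps_eq_proj]; exact map_one _

lemma eps_mul (x y : A) : eps K A 𝒜 (x * y) = eps K A 𝒜 x * eps K A 𝒜 y := by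
  simp only [eps_eq_proj]; exact map_mul _ x y

lemma eps_mem_zero {a : A} (h : a ∈ 𝒜 0) : eps K A 𝒜 a = a :=
  DirectSum.decompose_of_mem_same 𝒜 h

lemma eps_mem_ne {a : A} {m : ℕ} (h : a ∈ 𝒜 m) (hm : m ≠ 0) : eps K A 𝒜 a = 0 := by
  rw [eps_apply, DirectSum.decompose_of_mem_ne 𝒜 h hm]

/-- The family of linear maps: identity inside `V`, `eps` outside. -/
def cfam (V : Finset (Fin n)) : Fin n → (A →ₗ[K] A) :=
  fun i => if i ∈ V then LinearMap.id else eps K A 𝒜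

/-- The family of linear maps: `id - eps` inside `V`, `eps` outside. -/
def dfam (V : Finset (Fin n)) : Fin n → (A →ₗ[K] A) :=
  fun i => if i ∈ V then LinearMap.id - eps K A 𝒜 else eps K A 𝒜

/-- The algebra homomorphism `T^n(A) → A` multiplying together the slots in `V` and
applying `eps` to the slots outside `V`. -/
def Efun (V : Finset (Fin n)) : (⨂[K] _ : Fin n, A) →ₐ[K] A :=
  PiTensorProduct.liftAlgHom
    ((MultilinearMap.mkPiAlgebra K (Fin n) A).compLinearMap (cfam K A n 𝒜 V))
    (by
      simp only [MultilinearMap.compLinearMap_apply, MultilinearMap.mkPiAlgebra_apply]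
      apply Finset.prod_eq_one
      intro i _
      show (cfam K A n 𝒜 V i) 1 = 1
      rw [cfam]
      split
      · rfl
      · exact eps_one K A 𝒜)
    (fun x y => by
      simp only [MultilinearMap.compLinearMap_apply, MultilinearMap.mkPiAlgebra_apply]
      rw [← Finset.prod_mul_distrib]
      apply Finset.prod_congr rfl
      intro i _
      show (cfam K A n 𝒜 V i) (x i * y i) = _
      rw [cfam]
      split
      · rfl
      · exact eps_mul K A 𝒜 (x i) (y i))

lemma Efun_tprod (V : Finset (Fin n)) (v : Fin n → A) :
    Efun K A n 𝒜 V (tprod K v) = ∏ i, (if i ∈ V then v i else eps K A 𝒜 (v i)) := by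
  simp only [Efun, PiTensorProduct.liftAlgHom_apply, PiTensorProduct.lift.tprod,
    MultilinearMap.compLinearMap_apply, MultilinearMap.mkPiAlgebra_apply]
  apply Finset.prod_congr rfl
  intro i _
  rw [cfam, apply_ite (fun g : A →ₗ[K] A => g (v i)), LinearMap.id_apply]

/-- The linear map `T^n(A) → A` multiplying `(id - eps)` of the slots in `V` with
`eps` of the slots outside `V`. -/
def Gfun (V : Finset (Fin n)) : (⨂[K] _ : Fin n, A) →ₗ[K] A :=
  PiTensorProduct.lift
    ((MultilinearMap.mkPiAlgebra K (Fin n) A).compLinearMap (dfam K A n 𝒜 V))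

lemma Gfun_tprod (V : Finset (Fin n)) (v : Fin n → A) :
    Gfun K A n 𝒜 V (tprod K v)
      = ∏ i, (if i ∈ V then v i - eps K A 𝒜 (v i) else eps K A 𝒜 (v i)) := by
  simp only [Gfun, PiTensorProduct.lift.tprod, MultilinearMap.compLinearMap_apply,
    MultilinearMap.mkPiAlgebra_apply]
  apply Finset.prod_congr rfl
  intro i _
  rw [dfam, apply_ite (fun g : A →ₗ[K] A => g (v i)), LinearMap.sub_apply, LinearMap.id_apply]

lemma Efun_eq_sum_Gfun (V : Finset (Fin n)) :
    (Efun K A n 𝒜 V).toLinearMap = ∑ S ∈ V.powerset, Gfun K A n 𝒜 S := by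
  apply PiTensorProduct.ext
  apply MultilinearMap.ext
  intro v
  simp only [LinearMap.compMultilinearMap_apply, LinearMap.coe_sum, Finset.sum_apply,
    AlgHom.toLinearMap_apply]
  rw [Efun_tprod, Finset.sum_congr rfl (fun S _ => Gfun_tprod K A n 𝒜 S v)]
  have hsplitV : ∏ i, (if i ∈ V then v i else eps K A 𝒜 (v i))
      = (∏ i ∈ V, v i) * ∏ i ∈ Vᶜ, eps K A 𝒜 (v i) := by
    rw [← Finset.prod_mul_prod_compl V]
    congr 1
    · exact Finset.prod_congr rfl fun i hi => if_pos hi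
    · exact Finset.prod_congr rfl fun i hi => if_neg (Finset.mem_compl.mp hi)
  rw [hsplitV]
  have hexp : ∏ i ∈ V, v i
      = ∑ S ∈ V.powerset, (∏ i ∈ S, (v i - eps K A 𝒜 (v i))) * ∏ i ∈ V \ S, eps K A 𝒜 (v i) := by
    rw [← Finset.prod_add (fun i => v i - eps K A 𝒜 (v i)) (fun i => eps K A 𝒜 (v i)) V]
    exact Finset.prod_congr rfl fun i _ => by ring
  rw [hexp, Finset.sum_mul]
  apply Finset.sum_congr rfl
  intro S hS
  rw [Finset.mem_powerset] at hS
  have hsplitS : ∏ i, (if i ∈ S then v i - eps K A 𝒜 (v i) else eps K A 𝒜 (v i))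
      = (∏ i ∈ S, (v i - eps K A 𝒜 (v i))) * ∏ i ∈ Sᶜ, eps K A 𝒜 (v i) := by
    rw [← Finset.prod_mul_prod_compl S]
    congr 1
    · exact Finset.prod_congr rfl fun i hi => if_pos hi
    · exact Finset.prod_congr rfl fun i hi => if_neg (Finset.mem_compl.mp hi)
  rw [hsplitS]
  have hunion : Sᶜ = (V \ S) ∪ Vᶜ := by
    ext i
    simp only [Finset.mem_compl, Finset.mem_union, Finset.mem_sdiff]
    constructor
    · intro hi
      by_cases hV : i ∈ V
      · exact Or.inl ⟨hV, hi⟩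
      · exact Or.inr hV
    · rintro (⟨_, hi⟩ | hi)
      · exact hi
      · exact fun hiS => hi (hS hiS)
  rw [hunion, Finset.prod_union (Finset.disjoint_left.mpr
    (fun a ha hc => (Finset.mem_compl.mp hc) (Finset.mem_sdiff.mp ha).1)), mul_assoc]

lemma Efun_apply_eq_sum (V : Finset (Fin n)) (z : ⨂[K] _ : Fin n, A) :
    Efun K A n 𝒜 V z = ∑ S ∈ V.powerset, Gfun K A n 𝒜 S z := by
  have := congrArg (fun g : (⨂[K] _ : Fin n, A) →ₗ[K] A => g z) (Efun_eq_sum_Gfun K A n 𝒜 V)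
  simpa using this

lemma permAlgHom_tprod (σ : Equiv.Perm (Fin n)) (v : Fin n → A) :
    permAlgHom K A n σ (tprod K v) = tprod K (fun i => v (σ i)) := by
  simp [permAlgHom, MultilinearMap.domDomCongr_apply]

lemma Gfun_perm (σ : Equiv.Perm (Fin n)) (V : Finset (Fin n)) (z : ⨂[K] _ : Fin n, A) :
    Gfun K A n 𝒜 V (permAlgHom K A n σ z) = Gfun K A n 𝒜 (V.image σ) z := by
  have hmaps : (Gfun K A n 𝒜 V).comp (permAlgHom K A n σ).toLinearMap
      = Gfun K A n 𝒜 (V.image σ) := by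
    apply PiTensorProduct.ext
    apply MultilinearMap.ext
    intro v
    simp only [LinearMap.compMultilinearMap_apply, LinearMap.comp_apply,
      AlgHom.toLinearMap_apply]
    rw [permAlgHom_tprod, Gfun_tprod, Gfun_tprod]
    rw [← Equiv.prod_comp σ
      (fun j => if j ∈ V.image σ then v j - eps K A 𝒜 (v j) else eps K A 𝒜 (v j))]
    apply Finset.prod_congr rfl
    intro i _
    have hmem : σ i ∈ V.image σ ↔ i ∈ V := by
      simp [Finset.mem_image, σ.injective.eq_iff]
    simp only [hmem]
  have := congrArg (fun g : (⨂[K] _ : Fin n, A) →ₗ[K] A => g z) hmaps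
  simpa using this

lemma mem_symInvariants_iff (x : ⨂[K] _ : Fin n, A) :
    x ∈ symInvariants K A n ↔ ∀ σ : Equiv.Perm (Fin n), permAlgHom K A n σ x = x := by
  simp [symInvariants, Algebra.mem_iInf, AlgHom.mem_equalizer]

lemma exists_perm_image (S T : Finset (Fin n)) (h : S.card = T.card) :
    ∃ σ : Equiv.Perm (Fin n), S.image σ = T := by
  classical
  have h2 : Sᶜ.card = Tᶜ.card := by simp [Finset.card_compl, h]
  let e1 : {x // x ∈ S} ≃ {x // x ∈ T} := Finset.equivOfCardEq h
  let e2' : {x // x ∈ Sᶜ} ≃ {x // x ∈ Tᶜ} := Finset.equivOfCardEq h2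
  let eS : {x : Fin n // ¬ x ∈ S} ≃ {x : Fin n // x ∈ Sᶜ} :=
    Equiv.subtypeEquivRight (fun x => (Finset.mem_compl).symm)
  let eT : {x : Fin n // x ∈ Tᶜ} ≃ {x : Fin n // ¬ x ∈ T} :=
    Equiv.subtypeEquivRight (fun x => Finset.mem_compl)
  let σ : Equiv.Perm (Fin n) :=
    (Equiv.sumCompl (· ∈ S)).symm.trans
      ((Equiv.sumCongr e1 ((eS.trans e2').trans eT)).trans (Equiv.sumCompl (· ∈ T)))
  refine ⟨σ, ?_⟩
  apply Finset.eq_of_subset_of_card_le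
  · intro y hy
    rw [Finset.mem_image] at hy
    obtain ⟨x, hx, rfl⟩ := hy
    show ((Equiv.sumCompl (· ∈ S)).symm.trans _) x ∈ T
    rw [Equiv.trans_apply, Equiv.sumCompl_symm_apply_of_pos (p := (· ∈ S)) hx]
    simp only [Equiv.trans_apply, Equiv.sumCongr_apply, Sum.map_inl,
      Equiv.sumCompl_apply_inl]
    exact (e1 ⟨x, hx⟩).2
  · rw [Finset.card_image_of_injective _ σ.injective, h]

lemma Gfun_card_congr {x : ⨂[K] _ : Fin n, A} (hx : x ∈ symInvariants K A n)
    {S T : Finset (Fin n)} (h : S.card = T.card) :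
    Gfun K A n 𝒜 S x = Gfun K A n 𝒜 T x := by
  obtain ⟨σ, hσ⟩ := exists_perm_image n S T h
  rw [← hσ, ← Gfun_perm, (mem_symInvariants_iff K A n x).1 hx σ]


/-- Projection onto the degree-`m` component, as a `K`-linear endomap of `A`. -/
def projL (m : ℕ) : A →ₗ[K] A where
  toFun a := (DirectSum.decompose 𝒜 a m : A)
  map_add' x y := by simp
  map_smul' c x := by
    show ((DirectSum.decompose 𝒜 (c • x)) m : A) = c • ((DirectSum.decompose 𝒜 x) m : A)
    rw [DirectSum.decompose_smul]
    rfl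

/-- The span of all homogeneous elements of degree at least `r`. -/
def Age (r : ℕ) : Submodule K A := Submodule.span K {a | ∃ m, r ≤ m ∧ a ∈ 𝒜 m}

lemma mem_Age_of_mem {r m : ℕ} (hrm : r ≤ m) {a : A} (ha : a ∈ 𝒜 m) : a ∈ Age K A 𝒜 r :=
  Submodule.subset_span ⟨m, hrm, ha⟩

lemma Age_mono {r r' : ℕ} (h : r ≤ r') : Age K A 𝒜 r' ≤ Age K A 𝒜 r :=
  Submodule.span_mono (fun a ⟨m, hm, ha⟩ => ⟨m, le_trans h hm, ha⟩)

lemma Age_mul_Age {r r' : ℕ} {x y : A} (hx : x ∈ Age K A 𝒜 r) (hy : y ∈ Age K A 𝒜 r') :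
    x * y ∈ Age K A 𝒜 (r + r') := by
  revert y
  have hmain : ∀ x ∈ Age K A 𝒜 r, ∀ y ∈ Age K A 𝒜 r', x * y ∈ Age K A 𝒜 (r + r') := by
    intro x hx
    induction hx using Submodule.span_induction with
    | mem a ha =>
      obtain ⟨m, hrm, ham⟩ := ha
      intro y hy
      induction hy using Submodule.span_induction with
      | mem c hc =>
        obtain ⟨m', hrm', hcm⟩ := hc
        exact mem_Age_of_mem K A 𝒜 (add_le_add hrm hrm') (SetLike.mul_mem_graded ham hcm)
      | zero => rw [mul_zero]; exact Submodule.zero_mem _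
      | add y z _ _ hy' hz' => rw [mul_add]; exact Submodule.add_mem _ hy' hz'
      | smul c y _ hy' => rw [mul_smul_comm]; exact Submodule.smul_mem _ c hy'
    | zero => intro y _; rw [zero_mul]; exact Submodule.zero_mem _
    | add x z _ _ hx' hz' => intro y hy; rw [add_mul]; exact Submodule.add_mem _ (hx' y hy) (hz' y hy)
    | smul c x _ hx' => intro y hy; rw [smul_mul_assoc]; exact Submodule.smul_mem _ c (hx' y hy)
  exact fun y hy => hmain x hx y hy

lemma notmem_Age {r d : ℕ} (hdr : d < r) {bb : A} (hbd : bb ∈ 𝒜 d) (hb : bb ≠ 0) :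
    bb ∉ Age K A 𝒜 r := by
  intro hmem
  have hle : Age K A 𝒜 r ≤ LinearMap.ker (projL K A 𝒜 d) := by
    rw [Age, Submodule.span_le]
    rintro a ⟨m, hrm, ham⟩
    simp only [SetLike.mem_coe, LinearMap.mem_ker]
    show ((DirectSum.decompose 𝒜 a) d : A) = 0
    rw [DirectSum.decompose_of_mem_ne 𝒜 ham (by omega : m ≠ d)]
  have h1 := LinearMap.mem_ker.mp (hle hmem)
  have h2 : projL K A 𝒜 d bb = bb := DirectSum.decompose_of_mem_same 𝒜 hbd
  rw [h2] at h1
  exact hb h1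

lemma Gfun_mem_Age {q : ℕ} (hq0 : 0 < q) (hqmin : ∀ d0, 0 < d0 → d0 < q → 𝒜 d0 = ⊥) (V : Finset (Fin n))
    {x : ⨂[K] _ : Fin n, A} (hx : x ∈ ⨆ d0 : ℕ, ⨆ _ : 0 < d0, gradePiece K A n 𝒜 d0) :
    Gfun K A n 𝒜 V x ∈ Age K A 𝒜 (q * V.card) := by
  have hle : (⨆ d0 : ℕ, ⨆ _ : 0 < d0, gradePiece K A n 𝒜 d0)
      ≤ Submodule.comap (Gfun K A n 𝒜 V) (Age K A 𝒜 (q * V.card)) := by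
    apply iSup_le; intro d0; apply iSup_le; intro hd0
    rw [gradePiece, Submodule.span_le]
    rintro t ⟨e, v, hv, hsum, rfl⟩
    simp only [SetLike.mem_coe, Submodule.mem_comap]
    rw [Gfun_tprod]
    by_cases hVpos : ∀ i ∈ V, q ≤ e i
    · by_cases hout : ∀ i, i ∉ V → e i = 0
      · have hmem : (∏ i, (if i ∈ V then v i - eps K A 𝒜 (v i) else eps K A 𝒜 (v i)))
            ∈ 𝒜 d0 := by
          rw [← hsum]
          refine SetLike.prod_mem_graded 𝒜 e _ (fun i _ => ?_)
          by_cases hiV : i ∈ V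
          · have hq := hVpos i hiV
            rw [if_pos hiV, eps_mem_ne K A 𝒜 (hv i) (by omega), sub_zero]
            exact hv i
          · have h0 : e i = 0 := hout i hiV
            rw [if_neg hiV, eps_mem_zero K A 𝒜 (h0 ▸ hv i)]
            exact hv i
        refine mem_Age_of_mem K A 𝒜 ?_ hmem
        calc q * V.card = ∑ _i ∈ V, q := by rw [Finset.sum_const, smul_eq_mul, mul_comm]
        _ ≤ ∑ i ∈ V, e i := Finset.sum_le_sum (fun i hi => hVpos i hi)
        _ ≤ ∑ i, e i := Finset.sum_le_sum_of_subset (Finset.subset_univ V)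
        _ = d0 := hsum
      · push_neg at hout
        obtain ⟨i, hiV, hei⟩ := hout
        have hzero : (∏ i, (if i ∈ V then v i - eps K A 𝒜 (v i) else eps K A 𝒜 (v i))) = 0 := by
          refine Finset.prod_eq_zero (Finset.mem_univ i) ?_
          rw [if_neg hiV]
          exact eps_mem_ne K A 𝒜 (hv i) hei
        rw [hzero]
        exact Submodule.zero_mem _
    · push_neg at hVpos
      obtain ⟨i, hiV, hei⟩ := hVpos
      have hzero : (∏ i, (if i ∈ V then v i - eps K A 𝒜 (v i) else eps K A 𝒜 (v i))) = 0 := by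
        refine Finset.prod_eq_zero (Finset.mem_univ i) ?_
        rw [if_pos hiV]
        rcases Nat.eq_zero_or_pos (e i) with h0 | hpos
        · rw [eps_mem_zero K A 𝒜 (h0 ▸ hv i), sub_self]
        · have hv0 : v i = 0 := by
            have hbot := hqmin (e i) hpos (by omega)
            simpa [hbot] using hv i
          rw [hv0]
          simp
      rw [hzero]
      exact Submodule.zero_mem _
  exact hle hx

lemma Gfun_empty {x : ⨂[K] _ : Fin n, A}
    (hx : x ∈ ⨆ d0 : ℕ, ⨆ _ : 0 < d0, gradePiece K A n 𝒜 d0) :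
    Gfun K A n 𝒜 ∅ x = 0 := by
  have hle : (⨆ d0 : ℕ, ⨆ _ : 0 < d0, gradePiece K A n 𝒜 d0)
      ≤ LinearMap.ker (Gfun K A n 𝒜 ∅) := by
    apply iSup_le; intro d0; apply iSup_le; intro hd0
    rw [gradePiece, Submodule.span_le]
    rintro t ⟨e, v, hv, hsum, rfl⟩
    simp only [SetLike.mem_coe, LinearMap.mem_ker]
    rw [Gfun_tprod]
    have hex : ∃ i, e i ≠ 0 := by
      by_contra hc
      push_neg at hc
      have : ∑ i, e i = 0 := Finset.sum_eq_zero (fun i _ => hc i)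
      omega
    obtain ⟨i, hi⟩ := hex
    refine Finset.prod_eq_zero (Finset.mem_univ i) ?_
    rw [if_neg (Finset.notMem_empty i)]
    exact eps_mem_ne K A 𝒜 (hv i) hi
  exact LinearMap.mem_ker.mp (hle hx)

lemma Efun_bracket {b : A} {d : ℕ} (hbd : b ∈ 𝒜 d) (hd0 : d ≠ 0) (V : Finset (Fin n)) :
    Efun K A n 𝒜 V (bracket K A n b) = V.card • b := by
  rw [bracket, map_sum]
  have hterm : ∀ i : Fin n, Efun K A n 𝒜 V (tprod K (Function.update (fun _ => (1:A)) i b))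
      = if i ∈ V then b else 0 := by
    intro i
    rw [Efun_tprod]
    rw [Finset.prod_eq_single i ?_ ?_]
    · rw [Function.update_self]
      split
      · rfl
      · exact eps_mem_ne K A 𝒜 hbd hd0
    · intro j _ hji
      rw [Function.update_of_ne hji]
      split
      · rfl
      · exact eps_one K A 𝒜
    · intro h
      exact absurd (Finset.mem_univ i) h
  rw [Finset.sum_congr rfl (fun i _ => hterm i), Finset.sum_ite_mem, Finset.univ_inter,
    Finset.sum_const]

lemma Lambda_bracket (hn : 0 < n) (hK : ∀ m : ℕ, 1 ≤ m → m ≤ n → (m : K) ≠ 0)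
    {b : A} {d : ℕ} (hbd : b ∈ 𝒜 d) (hd0 : d ≠ 0) :
    (∑ V : Finset (Fin n),
        ((-1:K)^(V.card+1) * (V.card : K)⁻¹) • (Efun K A n 𝒜 V).toLinearMap)
      (bracket K A n b) = b := by
  rw [LinearMap.sum_apply]
  have hterm : ∀ V : Finset (Fin n),
      (((-1:K)^(V.card+1) * (V.card : K)⁻¹) • (Efun K A n 𝒜 V).toLinearMap)
        (bracket K A n b)
      = (((-1:K)^(V.card+1) * (V.card : K)⁻¹) * (V.card : K)) • b := by
    intro V
    rw [LinearMap.smul_apply, AlgHom.toLinearMap_apply, Efun_bracket K A n 𝒜 hbd hd0 V,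
      ← Nat.cast_smul_eq_nsmul K, smul_smul]
  rw [Finset.sum_congr rfl (fun V _ => hterm V), ← Finset.sum_smul]
  have hsum : ∑ V : Finset (Fin n), (((-1:K)^(V.card+1) * (V.card : K)⁻¹) * (V.card : K))
      = ∑ m ∈ Finset.range (n+1),
          (n.choose m) • (((-1:K)^(m+1) * (m : K)⁻¹) * (m : K)) := by
    rw [← Finset.powerset_univ,
      Finset.sum_powerset_apply_card (fun m => ((-1:K)^(m+1) * (m : K)⁻¹) * (m : K))]
    simp
  rw [hsum]
  have hsum2 : ∑ m ∈ Finset.range (n+1),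
        (n.choose m) • (((-1:K)^(m+1) * (m : K)⁻¹) * (m : K))
      = ∑ m ∈ Finset.range (n+1),
          ((-1:K) ^ (m+1) * (m : K)⁻¹ * (n.choose m : K)) * (m : K) := by
    apply Finset.sum_congr rfl
    intro m _
    rw [nsmul_eq_mul]
    ring
  rw [hsum2, Kalpha n hn hK, one_smul]

lemma Lambda_mul_mem {q : ℕ} (hq0 : 0 < q) (hqmin : ∀ d0, 0 < d0 → d0 < q → 𝒜 d0 = ⊥)
    (hn : 0 < n) (hK : ∀ m : ℕ, 1 ≤ m → m ≤ n → (m : K) ≠ 0)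
    {x y : ⨂[K] _ : Fin n, A} (hx : x ∈ posPart K A n 𝒜) (hy : y ∈ posPart K A n 𝒜) :
    (∑ V : Finset (Fin n),
        ((-1:K)^(V.card+1) * (V.card : K)⁻¹) • (Efun K A n 𝒜 V).toLinearMap) (x * y)
      ∈ Age K A 𝒜 ((n+1)*q) := by
  classical
  obtain ⟨hxInv, hxPos⟩ := Submodule.mem_inf.mp hx
  obtain ⟨hyInv, hyPos⟩ := Submodule.mem_inf.mp hy
  rw [Subalgebra.mem_toSubmodule] at hxInv hyInv
  have hcanon : ∀ s : ℕ, s ≤ n → ∃ S : Finset (Fin n), S.card = s := by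
    intro s hs
    obtain ⟨S, _, hcard⟩ := Finset.exists_subset_card_eq
      (show s ≤ (Finset.univ : Finset (Fin n)).card by simpa using hs)
    exact ⟨S, hcard⟩
  have hcard_le : ∀ S : Finset (Fin n), S.card ≤ n := by
    intro S
    simpa using Finset.card_le_univ S
  set γx : ℕ → A := fun s =>
    if hs : s ≤ n then Gfun K A n 𝒜 (hcanon s hs).choose x else 0 with hγxdef
  set γy : ℕ → A := fun s =>
    if hs : s ≤ n then Gfun K A n 𝒜 (hcanon s hs).choose y else 0 with hγydef
  have hγx : ∀ S : Finset (Fin n), Gfun K A n 𝒜 S x = γx S.card := by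
    intro S
    rw [hγxdef]
    simp only
    rw [dif_pos (hcard_le S)]
    exact Gfun_card_congr K A n 𝒜 hxInv ((hcanon S.card (hcard_le S)).choose_spec.symm)
  have hγy : ∀ S : Finset (Fin n), Gfun K A n 𝒜 S y = γy S.card := by
    intro S
    rw [hγydef]
    simp only
    rw [dif_pos (hcard_le S)]
    exact Gfun_card_congr K A n 𝒜 hyInv ((hcanon S.card (hcard_le S)).choose_spec.symm)
  have hγx0 : γx 0 = 0 := by
    have h := hγx ∅
    rw [Finset.card_empty] at h
    rw [← h]
    exact Gfun_empty K A n 𝒜 hxPos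
  have hγy0 : γy 0 = 0 := by
    have h := hγy ∅
    rw [Finset.card_empty] at h
    rw [← h]
    exact Gfun_empty K A n 𝒜 hyPos
  have hγxAge : ∀ s : ℕ, γx s ∈ Age K A 𝒜 (q * s) := by
    intro s
    rw [hγxdef]
    simp only
    by_cases hs : s ≤ n
    · rw [dif_pos hs]
      have h := Gfun_mem_Age K A n 𝒜 hq0 hqmin (hcanon s hs).choose hxPos
      rwa [(hcanon s hs).choose_spec] at h
    · rw [dif_neg hs]
      exact Submodule.zero_mem _
  have hγyAge : ∀ s : ℕ, γy s ∈ Age K A 𝒜 (q * s) := by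
    intro s
    rw [hγydef]
    simp only
    by_cases hs : s ≤ n
    · rw [dif_pos hs]
      have h := Gfun_mem_Age K A n 𝒜 hq0 hqmin (hcanon s hs).choose hyPos
      rwa [(hcanon s hs).choose_spec] at h
    · rw [dif_neg hs]
      exact Submodule.zero_mem _
  set F : ℕ → A := fun m => ((-1:K)^(m+1) * (m : K)⁻¹) •
      ((∑ s ∈ Finset.range (n+1), (m.choose s) • γx s)
        * (∑ t ∈ Finset.range (n+1), (m.choose t) • γy t)) with hFdef
  rw [LinearMap.sum_apply]
  have hstep1 : ∀ V : Finset (Fin n),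
      (((-1:K)^(V.card+1) * (V.card : K)⁻¹) • (Efun K A n 𝒜 V).toLinearMap) (x*y)
      = F V.card := by
    intro V
    rw [LinearMap.smul_apply, AlgHom.toLinearMap_apply, _root_.map_mul]
    simp only [hFdef]
    have hxV : Efun K A n 𝒜 V x = ∑ s ∈ Finset.range (n+1), (V.card.choose s) • γx s := by
      rw [Efun_apply_eq_sum, Finset.sum_congr rfl (fun S _ => hγx S),
        Finset.sum_powerset_apply_card γx]
      apply Finset.sum_subset
      · exact Finset.range_subset_range.mpr (by have := hcard_le V; omega)
      · intro s hs1 hs2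
        rw [Finset.mem_range] at hs1 hs2
        rw [Nat.choose_eq_zero_of_lt (by omega), zero_smul]
    have hyV : Efun K A n 𝒜 V y = ∑ t ∈ Finset.range (n+1), (V.card.choose t) • γy t := by
      rw [Efun_apply_eq_sum, Finset.sum_congr rfl (fun S _ => hγy S),
        Finset.sum_powerset_apply_card γy]
      apply Finset.sum_subset
      · exact Finset.range_subset_range.mpr (by have := hcard_le V; omega)
      · intro s hs1 hs2
        rw [Finset.mem_range] at hs1 hs2
        rw [Nat.choose_eq_zero_of_lt (by omega), zero_smul]
    rw [hxV, hyV]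
  rw [Finset.sum_congr rfl (fun V _ => hstep1 V)]
  have hgroup : ∑ V : Finset (Fin n), F V.card
      = ∑ m ∈ Finset.range (n+1), (n.choose m) • F m := by
    rw [← Finset.powerset_univ, Finset.sum_powerset_apply_card F]
    simp
  rw [hgroup]
  have hexpand : ∀ m ∈ Finset.range (n+1), (n.choose m) • F m
      = ∑ s ∈ Finset.range (n+1), ∑ t ∈ Finset.range (n+1),
          ((((-1:K)^(m+1) * (m : K)⁻¹) * (n.choose m : K))
            * ((m.choose s : K) * (m.choose t : K))) • (γx s * γy t) := by
    intro m _
    rw [hFdef]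
    simp only
    rw [Finset.sum_mul_sum, Finset.smul_sum, Finset.smul_sum]
    apply Finset.sum_congr rfl
    intro s _
    rw [Finset.smul_sum, Finset.smul_sum]
    apply Finset.sum_congr rfl
    intro t _
    rw [← Nat.cast_smul_eq_nsmul K (m.choose s), ← Nat.cast_smul_eq_nsmul K (m.choose t),
      smul_mul_smul_comm, ← Nat.cast_smul_eq_nsmul K (n.choose m)]
    simp only [smul_smul]
    congr 1
    ring
  rw [Finset.sum_congr rfl hexpand]
  rw [Finset.sum_comm]
  apply Submodule.sum_mem
  intro s _
  rw [Finset.sum_comm]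
  apply Submodule.sum_mem
  intro t _
  rw [← Finset.sum_smul]
  by_cases hst : s + t ≤ n
  · rcases Nat.eq_zero_or_pos s with rfl | hs1
    · rw [hγx0, zero_mul, smul_zero]
      exact Submodule.zero_mem _
    rcases Nat.eq_zero_or_pos t with rfl | ht1
    · rw [hγy0, mul_zero, smul_zero]
      exact Submodule.zero_mem _
    have hzero : ∑ m ∈ Finset.range (n+1),
        ((((-1:K)^(m+1) * (m : K)⁻¹) * (n.choose m : K))
          * ((m.choose s : K) * (m.choose t : K))) = 0 := by
      rw [← Kident n s t hK hs1 ht1 hst]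
    rw [hzero, zero_smul]
    exact Submodule.zero_mem _
  · apply Submodule.smul_mem
    have h3 := Age_mul_Age K A 𝒜 (hγxAge s) (hγyAge t)
    refine Age_mono K A 𝒜 ?_ h3
    calc (n+1)*q = q*(n+1) := mul_comm _ _
    _ ≤ q*(s+t) := Nat.mul_le_mul_left q (by omega)
    _ = q*s + q*t := by ring

end graded

end BracketAux

/-- Let `K` be a field with `char K = 0` or `char K > n`, and let
`A = ⊕_{d≥0} A_d` be a graded commutative `K`-algebra with `A₀ = K`.  Let `q` be the
minimal positive integer with `A_q ≠ 0`.  If `b` is a nonzero homogeneous element of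
`A` of positive degree `d < (n+1)q`, then `[b]` is indecomposable in `B = Tⁿ(A)^{Sₙ}`,
i.e. `[b] ∉ (B₊)²`. -/
theorem bracket_indecomposable [GradedAlgebra 𝒜]
    (hchar : ringChar K = 0 ∨ n < ringChar K)
    (h0 : ∀ a ∈ 𝒜 0, ∃ c : K, a = algebraMap K A c)
    (q : ℕ) (hq0 : 0 < q) (hqne : 𝒜 q ≠ ⊥)
    (hqmin : ∀ d, 0 < d → d < q → 𝒜 d = ⊥)
    (b : A) (hb : b ≠ 0) (d : ℕ) (hd0 : 0 < d) (hdlt : d < (n + 1) * q)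
    (hbd : b ∈ 𝒜 d) :
    bracket K A n b ∉ posPartSq K A n 𝒜 := by
  classical
  intro hmem
  have hn : 0 < n := by
    rcases Nat.eq_zero_or_pos n with hn0 | h
    · subst hn0
      rw [hqmin d hd0 (by omega)] at hbd
      exact absurd (show b = 0 by simpa using hbd) hb
    · exact h
  have hK : ∀ m : ℕ, 1 ≤ m → m ≤ n → (m : K) ≠ 0 := by
    intro m h1 h2
    haveI := ringChar.charP K
    rcases hchar with h0 | hp
    · have hcz : CharZero K := by
        haveI : CharP K 0 := h0 ▸ ringChar.charP K
        exact CharP.charP_to_charZero K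
      exact Nat.cast_ne_zero.mpr (by omega)
    · intro hc
      rw [CharP.cast_eq_zero_iff K (ringChar K) m] at hc
      have := Nat.le_of_dvd (by omega) hc
      omega
  have hbr := BracketAux.Lambda_bracket K A n 𝒜 hn hK hbd (by omega : d ≠ 0)
  have hle : posPartSq K A n 𝒜 ≤ Submodule.comap
      (∑ V : Finset (Fin n),
        ((-1:K)^(V.card+1) * (V.card : K)⁻¹) • (BracketAux.Efun K A n 𝒜 V).toLinearMap)
      (BracketAux.Age K A 𝒜 ((n+1)*q)) := by
    rw [posPartSq, Submodule.span_le]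
    rintro t ⟨u, hu, w, hw, rfl⟩
    simp only [SetLike.mem_coe, Submodule.mem_comap]
    exact BracketAux.Lambda_mul_mem K A n 𝒜 hq0 hqmin hn hK hu hw
  have hmem2 := hle hmem
  rw [Submodule.mem_comap, hbr] at hmem2
  exact BracketAux.notmem_Age K A 𝒜 hdlt hbd hb hmem2

end
end

section
/- The invariant algebra R^{S_4} is generated as a K-algebra by the ten elements [x], [x²], [x³], [z²], [z⁴], [z⁶], [xz²], [x²z²], [xz⁴], and z_1z_2z_3. -/
noncomputable section

open MvPolynomial

/-- The set of two-element subsets of `{1,2,3,4}` (modelled as non-diagonal unordered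
pairs of elements of `Fin 4`), indexing the variables of the polynomial ring `R`. -/
abbrev PairIdx : Type := {p : Sym2 (Fin 4) // ¬ p.IsDiag}

/-- The two-element subset `{i, j}`. -/
def pr (i j : Fin 4) (h : i ≠ j) : PairIdx := ⟨s(i, j), by simp [Sym2.mk_isDiag_iff, h]⟩

/-- The permutation of two-element subsets induced by a permutation `σ` of `{1,2,3,4}`. -/
def pairPerm (σ : Equiv.Perm (Fin 4)) : Equiv.Perm PairIdx :=
  Equiv.subtypeEquiv
    { toFun := Sym2.map σ
      invFun := Sym2.map σ.symm
      left_inv := fun p => by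
        rw [show Sym2.map σ.symm (Sym2.map σ p) = Sym2.map (σ.symm ∘ σ) p by
          rw [Sym2.map_comp]; rfl]
        simp
      right_inv := fun p => by
        rw [show Sym2.map σ (Sym2.map σ.symm p) = Sym2.map (σ ∘ σ.symm) p by
          rw [Sym2.map_comp]; rfl]
        simp }
    (fun p => not_congr (Sym2.isDiag_map σ.injective).symm)

variable (K : Type*) [Field K]

/-- `R := K[x_{{i,j}}]`, the six-variable polynomial ring on the variables indexed by
the two-element subsets of `{1,2,3,4}`. -/
abbrev R4 : Type _ := MvPolynomial PairIdx K

/-- The action of `σ ∈ S₄` on `R`, `σ · x_{{i,j}} = x_{{σ(i),σ(j)}}`, as a `K`-algebra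
homomorphism. -/
def actS4 (σ : Equiv.Perm (Fin 4)) : R4 K →ₐ[K] R4 K := rename (pairPerm σ)

/-- The invariant subalgebra `R^{S₄}`. -/
def S4Inv : Subalgebra K (R4 K) :=
  ⨅ σ : Equiv.Perm (Fin 4), AlgHom.equalizer (actS4 K σ) (AlgHom.id K (R4 K))

/-- `x₁ = x_{{1,2}} + x_{{3,4}}`, `x₂ = x_{{1,3}} + x_{{2,4}}`, `x₃ = x_{{1,4}} + x_{{2,3}}`
(vertices renamed `1,2,3,4 → 0,1,2,3`). -/
def xg : Fin 3 → R4 K :=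
  ![X (pr 0 1 (by decide)) + X (pr 2 3 (by decide)),
    X (pr 0 2 (by decide)) + X (pr 1 3 (by decide)),
    X (pr 0 3 (by decide)) + X (pr 1 2 (by decide))]

/-- `z₁ = x_{{1,2}} − x_{{3,4}}`, `z₂ = x_{{1,3}} − x_{{2,4}}`, `z₃ = x_{{1,4}} − x_{{2,3}}`. -/
def zg : Fin 3 → R4 K :=
  ![X (pr 0 1 (by decide)) - X (pr 2 3 (by decide)),
    X (pr 0 2 (by decide)) - X (pr 1 3 (by decide)),
    X (pr 0 3 (by decide)) - X (pr 1 2 (by decide))]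

/-- `[x^a z^{2b}] := Σ_{i=1}^{3} x_i^a z_i^{2b}`. -/
def pSum (a b : ℕ) : R4 K := ∑ i : Fin 3, xg K i ^ a * zg K i ^ (2 * b)

set_option linter.unreachableTactic false
set_option linter.unusedTactic false
set_option linter.unusedSectionVars false

section AuxInvariant

abbrev P3 := MvPolynomial (Fin 3 ⊕ Fin 3) K
def uu (i : Fin 3) : P3 K := X (Sum.inl i)
def vv (i : Fin 3) : P3 K := X (Sum.inr i)
def TT (i : Fin 3) (c : ℕ × ℕ) : P3 K := uu K i ^ c.1 * vv K i ^ (2 * c.2)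
def Qc (c : ℕ × ℕ) : P3 K := TT K 0 c + TT K 1 c + TT K 2 c
def ww : P3 K := vv K 0 * vv K 1 * vv K 2

def Qs (a b : ℕ) : P3 K := ∑ i : Fin 3, uu K i ^ a * vv K i ^ (2*b)
def genP : Set (P3 K) :=
  {Qs K 1 0, Qs K 2 0, Qs K 3 0, Qs K 0 1, Qs K 0 2, Qs K 0 3, Qs K 1 1, Qs K 2 1, Qs K 1 2, ww K}
def AP : Subalgebra K (P3 K) := Algebra.adjoin K (genP K)

def E1 : P3 K := uu K 0 + uu K 1 + uu K 2
def E2 : P3 K := uu K 0 * uu K 1 + uu K 0 * uu K 2 + uu K 1 * uu K 2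
def E3 : P3 K := uu K 0 * uu K 1 * uu K 2
def F1 : P3 K := vv K 0 ^ 2 + vv K 1 ^ 2 + vv K 2 ^ 2
def F2 : P3 K := vv K 0 ^ 2 * vv K 1 ^ 2 + vv K 0 ^ 2 * vv K 2 ^ 2 + vv K 1 ^ 2 * vv K 2 ^ 2
def F3 : P3 K := vv K 0 ^ 2 * vv K 1 ^ 2 * vv K 2 ^ 2

variable {K}

lemma gen_mem (x : P3 K) (hx : x ∈ genP K) : x ∈ AP K := Algebra.subset_adjoin hx

lemma smul_cancel_mem (c : K) (hc : c ≠ 0) {x : P3 K} (h : c • x ∈ AP K) : x ∈ AP K := by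
  have : x = c⁻¹ • (c • x) := by rw [smul_smul, inv_mul_cancel₀ hc, one_smul]
  rw [this]; exact Subalgebra.smul_mem _ h _

lemma newtonU (a b : ℕ) : Qs K (a+3) b
    = E1 K * Qs K (a+2) b - E2 K * Qs K (a+1) b + E3 K * Qs K a b := by
  simp only [Qs, E1, E2, E3, Fin.sum_univ_three]; ring

lemma newtonV (a b : ℕ) : Qs K a (b+3)
    = F1 K * Qs K a (b+2) - F2 K * Qs K a (b+1) + F3 K * Qs K a b := by
  simp only [Qs, F1, F2, F3, Fin.sum_univ_three]; ring

variable (h2 : (2:K) ≠ 0) (h3 : (3:K) ≠ 0)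
include h2 h3

lemma h6 : (6:K) ≠ 0 := by
  have : (6:K) = 2 * 3 := by norm_num
  rw [this]; exact mul_ne_zero h2 h3

lemma E1_mem : E1 K ∈ AP K := by
  have : E1 K = Qs K 1 0 := by simp only [Qs, E1, Fin.sum_univ_three]; ring
  rw [this]; exact gen_mem _ (by simp [genP])

lemma E2_mem : E2 K ∈ AP K := by
  refine smul_cancel_mem 2 h2 ?_
  have : (2:K) • E2 K = Qs K 1 0 ^ 2 - Qs K 2 0 := by
    simp only [Qs, E2, Fin.sum_univ_three, smul_eq_C_mul, map_ofNat]; ring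
  rw [this]
  exact sub_mem (pow_mem (gen_mem _ (by simp [genP])) 2) (gen_mem _ (by simp [genP]))

lemma E3_mem : E3 K ∈ AP K := by
  refine smul_cancel_mem 6 (h6 h2 h3) ?_
  have : (6:K) • E3 K = Qs K 1 0 ^ 3 - 3 * Qs K 1 0 * Qs K 2 0 + 2 * Qs K 3 0 := by
    simp only [Qs, E3, Fin.sum_univ_three, smul_eq_C_mul, map_ofNat]; ring
  rw [this]
  refine add_mem (sub_mem (pow_mem (gen_mem _ (by simp [genP])) 3) ?_) ?_
  · exact mul_mem (mul_mem (Subalgebra.natCast_mem _ 3) (gen_mem _ (by simp [genP])))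
      (gen_mem _ (by simp [genP]))
  · exact mul_mem (Subalgebra.natCast_mem _ 2) (gen_mem _ (by simp [genP]))

lemma F1_mem : F1 K ∈ AP K := by
  have : F1 K = Qs K 0 1 := by simp only [Qs, F1, Fin.sum_univ_three]; ring
  rw [this]; exact gen_mem _ (by simp [genP])

lemma F2_mem : F2 K ∈ AP K := by
  refine smul_cancel_mem 2 h2 ?_
  have : (2:K) • F2 K = Qs K 0 1 ^ 2 - Qs K 0 2 := by
    simp only [Qs, F2, Fin.sum_univ_three, smul_eq_C_mul, map_ofNat]; ring
  rw [this]
  exact sub_mem (pow_mem (gen_mem _ (by simp [genP])) 2) (gen_mem _ (by simp [genP]))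

lemma F3_mem : F3 K ∈ AP K := by
  refine smul_cancel_mem 6 (h6 h2 h3) ?_
  have : (6:K) • F3 K = Qs K 0 1 ^ 3 - 3 * Qs K 0 1 * Qs K 0 2 + 2 * Qs K 0 3 := by
    simp only [Qs, F3, Fin.sum_univ_three, smul_eq_C_mul, map_ofNat]; ring
  rw [this]
  refine add_mem (sub_mem (pow_mem (gen_mem _ (by simp [genP])) 3) ?_) ?_
  · exact mul_mem (mul_mem (Subalgebra.natCast_mem _ 3) (gen_mem _ (by simp [genP])))
      (gen_mem _ (by simp [genP]))
  · exact mul_mem (Subalgebra.natCast_mem _ 2) (gen_mem _ (by simp [genP]))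

lemma Qs_mem : ∀ a b : ℕ, Qs K a b ∈ AP K := by
  have key : ∀ n a b : ℕ, a + b ≤ n → Qs K a b ∈ AP K := by
    intro n
    induction n with
    | zero =>
      intro a b hab
      obtain ⟨rfl, rfl⟩ : a = 0 ∧ b = 0 := by omega
      have : Qs K 0 0 = ((3:ℕ) : P3 K) := by
        norm_num [Qs, Fin.sum_univ_three]
      rw [this]; exact Subalgebra.natCast_mem _ 3
    | succ n ih =>
      intro a b hab
      rcases Nat.lt_or_ge a 3 with ha | ha
      · rcases Nat.lt_or_ge b 3 with hb | hb
        · -- a ≤ 2, b ≤ 2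
          interval_cases a <;> interval_cases b
          · have : Qs K 0 0 = ((3:ℕ) : P3 K) := by
              norm_num [Qs, Fin.sum_univ_three]
            rw [this]; exact Subalgebra.natCast_mem _ 3
          · exact gen_mem _ (by simp [genP])
          · exact gen_mem _ (by simp [genP])
          · exact gen_mem _ (by simp [genP])
          · exact gen_mem _ (by simp [genP])
          · exact gen_mem _ (by simp [genP])
          · exact gen_mem _ (by simp [genP])
          · exact gen_mem _ (by simp [genP])
          · -- (2,2)
            refine smul_cancel_mem 6 (h6 h2 h3) ?_
            have : (6:K) • Qs K 2 2 =
                2 * Qs K 1 1 ^ 2 + 4 * Qs K 1 0 * Qs K 1 2 + 4 * Qs K 2 1 * Qs K 0 1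
                + Qs K 2 0 * Qs K 0 2 - Qs K 2 0 * Qs K 0 1 ^ 2 - Qs K 1 0 ^ 2 * Qs K 0 2
                - 4 * Qs K 1 0 * Qs K 0 1 * Qs K 1 1 + Qs K 1 0 ^ 2 * Qs K 0 1 ^ 2 := by
              simp only [Qs, Fin.sum_univ_three, smul_eq_C_mul, map_ofNat]; ring
            rw [this]
            have two : ((2:ℕ):P3 K) ∈ AP K := Subalgebra.natCast_mem _ 2
            have four : ((4:ℕ):P3 K) ∈ AP K := Subalgebra.natCast_mem _ 4
            rw [show ((2:ℕ):P3 K) = 2 by norm_cast] at two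
            rw [show ((4:ℕ):P3 K) = 4 by norm_cast] at four
            have m10 : Qs K 1 0 ∈ AP K := gen_mem _ (by simp [genP])
            have m20 : Qs K 2 0 ∈ AP K := gen_mem _ (by simp [genP])
            have m01 : Qs K 0 1 ∈ AP K := gen_mem _ (by simp [genP])
            have m02 : Qs K 0 2 ∈ AP K := gen_mem _ (by simp [genP])
            have m11 : Qs K 1 1 ∈ AP K := gen_mem _ (by simp [genP])
            have m21 : Qs K 2 1 ∈ AP K := gen_mem _ (by simp [genP])
            have m12 : Qs K 1 2 ∈ AP K := gen_mem _ (by simp [genP])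
            exact add_mem (sub_mem (sub_mem (sub_mem (add_mem (add_mem (add_mem
              (mul_mem two (pow_mem m11 2))
              (mul_mem (mul_mem four m10) m12))
              (mul_mem (mul_mem four m21) m01))
              (mul_mem m20 m02))
              (mul_mem m20 (pow_mem m01 2)))
              (mul_mem (pow_mem m10 2) m02))
              (mul_mem (mul_mem (mul_mem four m10) m01) m11))
              (mul_mem (pow_mem m10 2) (pow_mem m01 2))
        · -- b ≥ 3
          obtain ⟨b', rfl⟩ : ∃ b', b = b' + 3 := ⟨b - 3, by omega⟩
          rw [newtonV]
          refine add_mem (sub_mem (mul_mem (F1_mem h2 h3) (ih _ _ (by omega)))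
            (mul_mem (F2_mem h2 h3) (ih _ _ (by omega))))
            (mul_mem (F3_mem h2 h3) (ih _ _ (by omega)))
      · obtain ⟨a', rfl⟩ : ∃ a', a = a' + 3 := ⟨a - 3, by omega⟩
        rw [newtonU]
        refine add_mem (sub_mem (mul_mem (E1_mem h2 h3) (ih _ _ (by omega)))
          (mul_mem (E2_mem h2 h3) (ih _ _ (by omega))))
          (mul_mem (E3_mem h2 h3) (ih _ _ (by omega)))
  exact fun a b => key (a+b) a b le_rfl
omit h2 h3
variable (K)
def pa : Equiv.Perm (Fin 3) := Equiv.swap 0 1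
def pb : Equiv.Perm (Fin 3) := Equiv.swap 1 2
variable {K}
@[simp] lemma pa0 : pa 0 = 1 := by decide
@[simp] lemma pa1 : pa 1 = 0 := by decide
@[simp] lemma pa2 : pa 2 = 2 := by decide
@[simp] lemma pb0 : pb 0 = 0 := by decide
@[simp] lemma pb1 : pb 1 = 2 := by decide
@[simp] lemma pb2 : pb 2 = 1 := by decide
variable (K)
def ra : P3 K →ₐ[K] P3 K := rename (Sum.map (pa : Fin 3 → Fin 3) pa)
def rb : P3 K →ₐ[K] P3 K := rename (Sum.map (pb : Fin 3 → Fin 3) pb)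
def n0 : P3 K →ₐ[K] P3 K := aeval (Sum.elim (fun i => uu K i) ![vv K 0, -vv K 1, -vv K 2])
def n1 : P3 K →ₐ[K] P3 K := aeval (Sum.elim (fun i => uu K i) ![-vv K 0, vv K 1, -vv K 2])
def n2 : P3 K →ₐ[K] P3 K := aeval (Sum.elim (fun i => uu K i) ![-vv K 0, -vv K 1, vv K 2])

variable {K}

@[simp] lemma ra_u (i) : ra K (uu K i) = uu K (pa i) := rename_X _ _
@[simp] lemma ra_v (i) : ra K (vv K i) = vv K (pa i) := rename_X _ _
@[simp] lemma rb_u (i) : rb K (uu K i) = uu K (pb i) := rename_X _ _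
@[simp] lemma rb_v (i) : rb K (vv K i) = vv K (pb i) := rename_X _ _
@[simp] lemma n0_u (i) : n0 K (uu K i) = uu K i := aeval_X _ _
@[simp] lemma n1_u (i) : n1 K (uu K i) = uu K i := aeval_X _ _
@[simp] lemma n2_u (i) : n2 K (uu K i) = uu K i := aeval_X _ _
@[simp] lemma n0_v (i) : n0 K (vv K i) = ![vv K 0, -vv K 1, -vv K 2] i := aeval_X _ _
@[simp] lemma n1_v (i) : n1 K (vv K i) = ![-vv K 0, vv K 1, -vv K 2] i := aeval_X _ _
@[simp] lemma n2_v (i) : n2 K (vv K i) = ![-vv K 0, -vv K 1, vv K 2] i := aeval_X _ _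

lemma n2_eq : (n2 K) = (n0 K).comp (n1 K) := by
  apply MvPolynomial.algHom_ext
  rintro (i | i) <;> fin_cases i <;>
    simp [show (X (Sum.inl _) : P3 K) = uu K _ from rfl,
      show (X (Sum.inr _) : P3 K) = vv K _ from rfl]

def SL : P3 K →ₗ[K] P3 K :=
  LinearMap.id + (n0 K).toLinearMap + (n1 K).toLinearMap + (n2 K).toLinearMap
def AvL : P3 K →ₗ[K] P3 K :=
  LinearMap.id + (ra K).toLinearMap + (rb K).toLinearMap
  + ((ra K).comp (rb K)).toLinearMap + ((rb K).comp (ra K)).toLinearMap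
  + ((ra K).comp ((rb K).comp (ra K))).toLinearMap
def LL : P3 K →ₗ[K] P3 K := (AvL (K := K)).comp (SL (K := K))

lemma LL_invariant (F : P3 K) (h0 : n0 K F = F) (h1 : n1 K F = F)
    (ha : ra K F = F) (hb : rb K F = F) : LL F = (24 : K) • F := by
  have h2' : n2 K F = F := by rw [n2_eq]; simp [AlgHom.comp_apply, h1, h0]
  simp only [LL, SL, AvL, LinearMap.comp_apply, LinearMap.add_apply, LinearMap.id_apply,
    AlgHom.toLinearMap_apply, AlgHom.comp_apply, h0, h1, h2', map_add, ha, hb]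
  module
lemma AvL_T (c0 c1 c2 : ℕ × ℕ) :
    AvL (TT K 0 c0 * TT K 1 c1 * TT K 2 c2)
    = Qc K c0 * Qc K c1 * Qc K c2 - Qc K (c0+c1) * Qc K c2 - Qc K (c0+c2) * Qc K c1
      - Qc K (c1+c2) * Qc K c0 + 2 * Qc K (c0+c1+c2) := by
  obtain ⟨a0, b0⟩ := c0; obtain ⟨a1, b1⟩ := c1; obtain ⟨a2, b2⟩ := c2
  simp only [AvL, LinearMap.add_apply, LinearMap.id_apply, AlgHom.toLinearMap_apply,
    AlgHom.comp_apply, TT, Qc, Prod.mk_add_mk, map_mul, map_pow, ra_u, ra_v, rb_u, rb_v,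
    pa0, pa1, pa2, pb0, pb1, pb2]
  ring

lemma ra_ww : ra K (ww K) = ww K := by
  simp only [ww, map_mul, ra_v, pa0, pa1, pa2]; ring
lemma rb_ww : rb K (ww K) = ww K := by
  simp only [ww, map_mul, rb_v, pb0, pb1, pb2]; ring

lemma AvL_ww_mul (x : P3 K) : AvL (ww K * x) = ww K * AvL x := by
  simp only [AvL, LinearMap.add_apply, LinearMap.id_apply, AlgHom.toLinearMap_apply,
    AlgHom.comp_apply, map_mul, ra_ww, rb_ww]
  ring

lemma Qc_eq (c : ℕ × ℕ) : Qc K c = Qs K c.1 c.2 := by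
  simp only [Qc, Qs, TT, Fin.sum_univ_three]

lemma Qc_mem (h2 : (2:K) ≠ 0) (h3 : (3:K) ≠ 0) (c : ℕ × ℕ) : Qc K c ∈ AP K := by
  rw [Qc_eq]; exact Qs_mem h2 h3 c.1 c.2

lemma mono_split (m : Fin 3 ⊕ Fin 3 →₀ ℕ) :
    (monomial m (1:K) : P3 K)
    = (uu K 0 ^ m (.inl 0) * uu K 1 ^ m (.inl 1) * uu K 2 ^ m (.inl 2))
      * (vv K 0 ^ m (.inr 0) * vv K 1 ^ m (.inr 1) * vv K 2 ^ m (.inr 2)) := by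
  rw [monomial_eq, Finsupp.prod_fintype _ _ (fun i => pow_zero _), Fintype.prod_sum_type]
  simp only [Fin.prod_univ_three, uu, vv, map_one, one_mul]

lemma SL_mono (m : Fin 3 ⊕ Fin 3 →₀ ℕ) :
    SL (monomial m (1:K)) =
      (uu K 0 ^ m (.inl 0) * uu K 1 ^ m (.inl 1) * uu K 2 ^ m (.inl 2)) *
      ((vv K 0 ^ m (.inr 0) * vv K 1 ^ m (.inr 1) * vv K 2 ^ m (.inr 2))
       + (vv K 0 ^ m (.inr 0) * (-vv K 1) ^ m (.inr 1) * (-vv K 2) ^ m (.inr 2))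
       + ((-vv K 0) ^ m (.inr 0) * vv K 1 ^ m (.inr 1) * (-vv K 2) ^ m (.inr 2))
       + ((-vv K 0) ^ m (.inr 0) * (-vv K 1) ^ m (.inr 1) * vv K 2 ^ m (.inr 2))) := by
  rw [mono_split]
  simp only [SL, LinearMap.add_apply, LinearMap.id_apply, AlgHom.toLinearMap_apply,
    map_mul, map_pow, n0_u, n1_u, n2_u, n0_v, n1_v, n2_v,
    Matrix.cons_val_zero, Matrix.cons_val_one, Matrix.head_cons, Matrix.cons_val_two,
    Matrix.tail_cons]
  ring

lemma key_mono (h2 : (2:K) ≠ 0) (h3 : (3:K) ≠ 0) (m : Fin 3 ⊕ Fin 3 →₀ ℕ) :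
    LL (monomial m (1:K)) ∈ AP K := by
  have hQ : ∀ c : ℕ × ℕ, Qc K c ∈ AP K := fun c => Qc_mem h2 h3 c
  have two : (2 : P3 K) ∈ AP K := by
    rw [show (2 : P3 K) = ((2:ℕ) : P3 K) by norm_cast]; exact Subalgebra.natCast_mem _ 2
  have www : ww K ∈ AP K := gen_mem _ (by simp [genP])
  have hNmem : ∀ c0 c1 c2 : ℕ × ℕ,
      Qc K c0 * Qc K c1 * Qc K c2 - Qc K (c0+c1) * Qc K c2 - Qc K (c0+c2) * Qc K c1
      - Qc K (c1+c2) * Qc K c0 + 2 * Qc K (c0+c1+c2) ∈ AP K := by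
    intro c0 c1 c2
    exact add_mem (sub_mem (sub_mem (sub_mem (mul_mem (mul_mem (hQ _) (hQ _)) (hQ _))
      (mul_mem (hQ _) (hQ _))) (mul_mem (hQ _) (hQ _))) (mul_mem (hQ _) (hQ _)))
      (mul_mem two (hQ _))
  rw [LL, LinearMap.comp_apply, SL_mono]
  generalize m (.inl 0) = a0; generalize m (.inl 1) = a1; generalize m (.inl 2) = a2
  generalize m (.inr 0) = b0; generalize m (.inr 1) = b1; generalize m (.inr 2) = b2
  rcases Nat.even_or_odd b0 with e0 | e0 <;> rcases Nat.even_or_odd b1 with e1 | e1 <;>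
      rcases Nat.even_or_odd b2 with e2 | e2 <;>
    simp only [e0.neg_pow, e1.neg_pow, e2.neg_pow]
  · -- eee
    obtain ⟨β0, hb0⟩ := e0; obtain ⟨β1, hb1⟩ := e1; obtain ⟨β2, hb2⟩ := e2
    rw [show (uu K 0 ^ a0 * uu K 1 ^ a1 * uu K 2 ^ a2) *
        ((vv K 0 ^ b0 * vv K 1 ^ b1 * vv K 2 ^ b2) + (vv K 0 ^ b0 * vv K 1 ^ b1 * vv K 2 ^ b2)
         + (vv K 0 ^ b0 * vv K 1 ^ b1 * vv K 2 ^ b2) + (vv K 0 ^ b0 * vv K 1 ^ b1 * vv K 2 ^ b2))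
        = (4:ℕ) • (TT K 0 (a0, β0) * TT K 1 (a1, β1) * TT K 2 (a2, β2)) by
          simp only [TT]; rw [hb0, hb1, hb2]; ring]
    rw [map_nsmul]
    exact nsmul_mem (by rw [AvL_T]; exact hNmem _ _ _) 4
  · -- eeo
    ring_nf
    simp only [map_zero]
    exact zero_mem _
  · ring_nf; simp only [map_zero]; exact zero_mem _
  · ring_nf; simp only [map_zero]; exact zero_mem _
  · ring_nf; simp only [map_zero]; exact zero_mem _
  · ring_nf; simp only [map_zero]; exact zero_mem _
  · ring_nf; simp only [map_zero]; exact zero_mem _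
  · -- ooo
    obtain ⟨β0, hb0⟩ := e0; obtain ⟨β1, hb1⟩ := e1; obtain ⟨β2, hb2⟩ := e2
    rw [show (uu K 0 ^ a0 * uu K 1 ^ a1 * uu K 2 ^ a2) *
        ((vv K 0 ^ b0 * vv K 1 ^ b1 * vv K 2 ^ b2) + (vv K 0 ^ b0 * -vv K 1 ^ b1 * -vv K 2 ^ b2)
         + (-vv K 0 ^ b0 * vv K 1 ^ b1 * -vv K 2 ^ b2)
         + (-vv K 0 ^ b0 * -vv K 1 ^ b1 * vv K 2 ^ b2))
        = (4:ℕ) • (ww K * (TT K 0 (a0, β0) * TT K 1 (a1, β1) * TT K 2 (a2, β2))) by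
          simp only [TT, ww]; rw [hb0, hb1, hb2]; ring]
    rw [map_nsmul, AvL_ww_mul]
    exact nsmul_mem (mul_mem www (by rw [AvL_T]; exact hNmem _ _ _)) 4

lemma main_P (h2 : (2:K) ≠ 0) (h3 : (3:K) ≠ 0) (F : P3 K)
    (h0 : n0 K F = F) (h1 : n1 K F = F) (hra : ra K F = F) (hrb : rb K F = F) :
    F ∈ AP K := by
  have h24 : (24:K) ≠ 0 := by
    have : (24:K) = 2*2*2*3 := by norm_num
    rw [this]; exact mul_ne_zero (mul_ne_zero (mul_ne_zero h2 h2) h2) h3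
  have hF : F = (24:K)⁻¹ • LL F := by
    rw [LL_invariant F h0 h1 hra hrb, smul_smul, inv_mul_cancel₀ h24, one_smul]
  rw [hF]
  refine Subalgebra.smul_mem _ ?_ _
  rw [show LL F = LL (∑ m ∈ F.support, monomial m (coeff m F)) by rw [← F.as_sum], map_sum]
  refine Subalgebra.sum_mem _ (fun m hm => ?_)
  rw [show (monomial m (coeff m F) : P3 K) = (coeff m F) • monomial m 1 by
    rw [smul_monomial, smul_eq_mul, mul_one], map_smul]
  exact Subalgebra.smul_mem _ (key_mono h2 h3 m) _

lemma pairPerm_eq (σ : Equiv.Perm (Fin 4)) (i j i' j' : Fin 4) (h : i ≠ j) (h' : i' ≠ j')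
    (e : σ i = i' ∧ σ j = j' ∨ σ i = j' ∧ σ j = i') :
    pairPerm σ (pr i j h) = pr i' j' h' := by
  apply Subtype.ext
  show Sym2.map σ s(i,j) = s(i',j')
  rw [Sym2.map_pair_eq]
  rcases e with ⟨e1, e2⟩ | ⟨e1, e2⟩ <;> rw [e1, e2]
  exact Sym2.eq_swap

lemma pairPerm_one (p : PairIdx) : pairPerm 1 p = p := by
  apply Subtype.ext
  show Sym2.map (1 : Equiv.Perm (Fin 4)) p.val = p.val
  simp [Sym2.map_id']

example : pairPerm (Equiv.swap 0 1 * Equiv.swap 2 3) (pr 0 2 (by decide)) = pr 1 3 (by decide) :=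
  pairPerm_eq _ _ _ _ _ _ _ (by decide)

lemma mem_S4Inv {f : R4 K} : f ∈ S4Inv K ↔ ∀ σ, actS4 K σ f = f := by
  simp [S4Inv, Algebra.mem_iInf, AlgHom.mem_equalizer]

lemma actS4_mul (σ τ : Equiv.Perm (Fin 4)) (f : R4 K) :
    actS4 K (σ * τ) f = actS4 K σ (actS4 K τ f) := by
  have hp : (pairPerm (σ * τ) : PairIdx → PairIdx) = pairPerm σ ∘ pairPerm τ := by
    funext p
    apply Subtype.ext
    show Sym2.map (σ * τ : Equiv.Perm (Fin 4)) p.val = Sym2.map σ (Sym2.map τ p.val)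
    rw [show ((σ * τ : Equiv.Perm (Fin 4)) : Fin 4 → Fin 4) = (σ : Fin 4 → Fin 4) ∘ τ from rfl,
      Sym2.map_comp]
    rfl
  simp only [actS4]
  rw [hp, ← rename_rename]

lemma actS4_one (f : R4 K) : actS4 K 1 f = f := by
  have : pairPerm 1 = Equiv.refl PairIdx := by
    apply Equiv.ext; intro p; exact pairPerm_one p
  simp [actS4, this, rename_id]

def pc : Equiv.Perm (Fin 3) := Equiv.swap 0 2
@[simp] lemma pc0 : pc 0 = 2 := by decide
@[simp] lemma pc1 : pc 1 = 1 := by decide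
@[simp] lemma pc2 : pc 2 = 0 := by decide

lemma hx_s01 (i : Fin 3) :
    actS4 K (Equiv.swap 0 1) (xg K i) = xg K (pb i) := by
  have e1 := pairPerm_eq (Equiv.swap (0:Fin 4) 1) 0 1 0 1 (by decide) (by decide) (by decide)
  have e2 := pairPerm_eq (Equiv.swap (0:Fin 4) 1) 2 3 2 3 (by decide) (by decide) (by decide)
  have e3 := pairPerm_eq (Equiv.swap (0:Fin 4) 1) 0 2 1 2 (by decide) (by decide) (by decide)
  have e4 := pairPerm_eq (Equiv.swap (0:Fin 4) 1) 1 3 0 3 (by decide) (by decide) (by decide)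
  have e5 := pairPerm_eq (Equiv.swap (0:Fin 4) 1) 0 3 1 3 (by decide) (by decide) (by decide)
  have e6 := pairPerm_eq (Equiv.swap (0:Fin 4) 1) 1 2 0 2 (by decide) (by decide) (by decide)
  fin_cases i <;>
    simp [xg, actS4, e1, e2, e3, e4, e5, e6] <;> try ring

lemma hz_s01 (i : Fin 3) :
    actS4 K (Equiv.swap 0 1) (zg K i) = C ((![1,-1,-1] : Fin 3 → K) i) * zg K (pb i) := by
  have e1 := pairPerm_eq (Equiv.swap (0:Fin 4) 1) 0 1 0 1 (by decide) (by decide) (by decide)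
  have e2 := pairPerm_eq (Equiv.swap (0:Fin 4) 1) 2 3 2 3 (by decide) (by decide) (by decide)
  have e3 := pairPerm_eq (Equiv.swap (0:Fin 4) 1) 0 2 1 2 (by decide) (by decide) (by decide)
  have e4 := pairPerm_eq (Equiv.swap (0:Fin 4) 1) 1 3 0 3 (by decide) (by decide) (by decide)
  have e5 := pairPerm_eq (Equiv.swap (0:Fin 4) 1) 0 3 1 3 (by decide) (by decide) (by decide)
  have e6 := pairPerm_eq (Equiv.swap (0:Fin 4) 1) 1 2 0 2 (by decide) (by decide) (by decide)
  fin_cases i <;>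
    simp [zg, actS4, e1, e2, e3, e4, e5, e6, map_neg, map_one] <;> try ring

lemma hx_s02 (i : Fin 3) :
    actS4 K (Equiv.swap 0 2) (xg K i) = xg K (pc i) := by
  have e1 := pairPerm_eq (Equiv.swap (0:Fin 4) 2) 0 1 1 2 (by decide) (by decide) (by decide)
  have e2 := pairPerm_eq (Equiv.swap (0:Fin 4) 2) 2 3 0 3 (by decide) (by decide) (by decide)
  have e3 := pairPerm_eq (Equiv.swap (0:Fin 4) 2) 0 2 0 2 (by decide) (by decide) (by decide)
  have e4 := pairPerm_eq (Equiv.swap (0:Fin 4) 2) 1 3 1 3 (by decide) (by decide) (by decide)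
  have e5 := pairPerm_eq (Equiv.swap (0:Fin 4) 2) 0 3 2 3 (by decide) (by decide) (by decide)
  have e6 := pairPerm_eq (Equiv.swap (0:Fin 4) 2) 1 2 0 1 (by decide) (by decide) (by decide)
  fin_cases i <;>
    simp [xg, actS4, e1, e2, e3, e4, e5, e6] <;> try ring

lemma hz_s02 (i : Fin 3) :
    actS4 K (Equiv.swap 0 2) (zg K i) = C ((![-1,1,-1] : Fin 3 → K) i) * zg K (pc i) := by
  have e1 := pairPerm_eq (Equiv.swap (0:Fin 4) 2) 0 1 1 2 (by decide) (by decide) (by decide)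
  have e2 := pairPerm_eq (Equiv.swap (0:Fin 4) 2) 2 3 0 3 (by decide) (by decide) (by decide)
  have e3 := pairPerm_eq (Equiv.swap (0:Fin 4) 2) 0 2 0 2 (by decide) (by decide) (by decide)
  have e4 := pairPerm_eq (Equiv.swap (0:Fin 4) 2) 1 3 1 3 (by decide) (by decide) (by decide)
  have e5 := pairPerm_eq (Equiv.swap (0:Fin 4) 2) 0 3 2 3 (by decide) (by decide) (by decide)
  have e6 := pairPerm_eq (Equiv.swap (0:Fin 4) 2) 1 2 0 1 (by decide) (by decide) (by decide)
  fin_cases i <;>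
    simp [zg, actS4, e1, e2, e3, e4, e5, e6, map_neg, map_one] <;> try ring

lemma hx_s03 (i : Fin 3) :
    actS4 K (Equiv.swap 0 3) (xg K i) = xg K (pa i) := by
  have e1 := pairPerm_eq (Equiv.swap (0:Fin 4) 3) 0 1 1 3 (by decide) (by decide) (by decide)
  have e2 := pairPerm_eq (Equiv.swap (0:Fin 4) 3) 2 3 0 2 (by decide) (by decide) (by decide)
  have e3 := pairPerm_eq (Equiv.swap (0:Fin 4) 3) 0 2 2 3 (by decide) (by decide) (by decide)
  have e4 := pairPerm_eq (Equiv.swap (0:Fin 4) 3) 1 3 0 1 (by decide) (by decide) (by decide)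
  have e5 := pairPerm_eq (Equiv.swap (0:Fin 4) 3) 0 3 0 3 (by decide) (by decide) (by decide)
  have e6 := pairPerm_eq (Equiv.swap (0:Fin 4) 3) 1 2 1 2 (by decide) (by decide) (by decide)
  fin_cases i <;>
    simp [xg, actS4, e1, e2, e3, e4, e5, e6] <;> try ring

lemma hz_s03 (i : Fin 3) :
    actS4 K (Equiv.swap 0 3) (zg K i) = C ((![-1,-1,1] : Fin 3 → K) i) * zg K (pa i) := by
  have e1 := pairPerm_eq (Equiv.swap (0:Fin 4) 3) 0 1 1 3 (by decide) (by decide) (by decide)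
  have e2 := pairPerm_eq (Equiv.swap (0:Fin 4) 3) 2 3 0 2 (by decide) (by decide) (by decide)
  have e3 := pairPerm_eq (Equiv.swap (0:Fin 4) 3) 0 2 2 3 (by decide) (by decide) (by decide)
  have e4 := pairPerm_eq (Equiv.swap (0:Fin 4) 3) 1 3 0 1 (by decide) (by decide) (by decide)
  have e5 := pairPerm_eq (Equiv.swap (0:Fin 4) 3) 0 3 0 3 (by decide) (by decide) (by decide)
  have e6 := pairPerm_eq (Equiv.swap (0:Fin 4) 3) 1 2 1 2 (by decide) (by decide) (by decide)
  fin_cases i <;>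
    simp [zg, actS4, e1, e2, e3, e4, e5, e6, map_neg, map_one] <;> try ring

lemma hx_s12 (i : Fin 3) :
    actS4 K (Equiv.swap 1 2) (xg K i) = xg K (pa i) := by
  have e1 := pairPerm_eq (Equiv.swap (1:Fin 4) 2) 0 1 0 2 (by decide) (by decide) (by decide)
  have e2 := pairPerm_eq (Equiv.swap (1:Fin 4) 2) 2 3 1 3 (by decide) (by decide) (by decide)
  have e3 := pairPerm_eq (Equiv.swap (1:Fin 4) 2) 0 2 0 1 (by decide) (by decide) (by decide)
  have e4 := pairPerm_eq (Equiv.swap (1:Fin 4) 2) 1 3 2 3 (by decide) (by decide) (by decide)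
  have e5 := pairPerm_eq (Equiv.swap (1:Fin 4) 2) 0 3 0 3 (by decide) (by decide) (by decide)
  have e6 := pairPerm_eq (Equiv.swap (1:Fin 4) 2) 1 2 1 2 (by decide) (by decide) (by decide)
  fin_cases i <;>
    simp [xg, actS4, e1, e2, e3, e4, e5, e6] <;> try ring

lemma hz_s12 (i : Fin 3) :
    actS4 K (Equiv.swap 1 2) (zg K i) = C ((![1,1,1] : Fin 3 → K) i) * zg K (pa i) := by
  have e1 := pairPerm_eq (Equiv.swap (1:Fin 4) 2) 0 1 0 2 (by decide) (by decide) (by decide)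
  have e2 := pairPerm_eq (Equiv.swap (1:Fin 4) 2) 2 3 1 3 (by decide) (by decide) (by decide)
  have e3 := pairPerm_eq (Equiv.swap (1:Fin 4) 2) 0 2 0 1 (by decide) (by decide) (by decide)
  have e4 := pairPerm_eq (Equiv.swap (1:Fin 4) 2) 1 3 2 3 (by decide) (by decide) (by decide)
  have e5 := pairPerm_eq (Equiv.swap (1:Fin 4) 2) 0 3 0 3 (by decide) (by decide) (by decide)
  have e6 := pairPerm_eq (Equiv.swap (1:Fin 4) 2) 1 2 1 2 (by decide) (by decide) (by decide)
  fin_cases i <;>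
    simp [zg, actS4, e1, e2, e3, e4, e5, e6, map_neg, map_one] <;> try ring

lemma hx_s13 (i : Fin 3) :
    actS4 K (Equiv.swap 1 3) (xg K i) = xg K (pc i) := by
  have e1 := pairPerm_eq (Equiv.swap (1:Fin 4) 3) 0 1 0 3 (by decide) (by decide) (by decide)
  have e2 := pairPerm_eq (Equiv.swap (1:Fin 4) 3) 2 3 1 2 (by decide) (by decide) (by decide)
  have e3 := pairPerm_eq (Equiv.swap (1:Fin 4) 3) 0 2 0 2 (by decide) (by decide) (by decide)
  have e4 := pairPerm_eq (Equiv.swap (1:Fin 4) 3) 1 3 1 3 (by decide) (by decide) (by decide)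
  have e5 := pairPerm_eq (Equiv.swap (1:Fin 4) 3) 0 3 0 1 (by decide) (by decide) (by decide)
  have e6 := pairPerm_eq (Equiv.swap (1:Fin 4) 3) 1 2 2 3 (by decide) (by decide) (by decide)
  fin_cases i <;>
    simp [xg, actS4, e1, e2, e3, e4, e5, e6] <;> try ring

lemma hz_s13 (i : Fin 3) :
    actS4 K (Equiv.swap 1 3) (zg K i) = C ((![1,1,1] : Fin 3 → K) i) * zg K (pc i) := by
  have e1 := pairPerm_eq (Equiv.swap (1:Fin 4) 3) 0 1 0 3 (by decide) (by decide) (by decide)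
  have e2 := pairPerm_eq (Equiv.swap (1:Fin 4) 3) 2 3 1 2 (by decide) (by decide) (by decide)
  have e3 := pairPerm_eq (Equiv.swap (1:Fin 4) 3) 0 2 0 2 (by decide) (by decide) (by decide)
  have e4 := pairPerm_eq (Equiv.swap (1:Fin 4) 3) 1 3 1 3 (by decide) (by decide) (by decide)
  have e5 := pairPerm_eq (Equiv.swap (1:Fin 4) 3) 0 3 0 1 (by decide) (by decide) (by decide)
  have e6 := pairPerm_eq (Equiv.swap (1:Fin 4) 3) 1 2 2 3 (by decide) (by decide) (by decide)
  fin_cases i <;>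
    simp [zg, actS4, e1, e2, e3, e4, e5, e6, map_neg, map_one] <;> try ring

lemma hx_s23 (i : Fin 3) :
    actS4 K (Equiv.swap 2 3) (xg K i) = xg K (pb i) := by
  have e1 := pairPerm_eq (Equiv.swap (2:Fin 4) 3) 0 1 0 1 (by decide) (by decide) (by decide)
  have e2 := pairPerm_eq (Equiv.swap (2:Fin 4) 3) 2 3 2 3 (by decide) (by decide) (by decide)
  have e3 := pairPerm_eq (Equiv.swap (2:Fin 4) 3) 0 2 0 3 (by decide) (by decide) (by decide)
  have e4 := pairPerm_eq (Equiv.swap (2:Fin 4) 3) 1 3 1 2 (by decide) (by decide) (by decide)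
  have e5 := pairPerm_eq (Equiv.swap (2:Fin 4) 3) 0 3 0 2 (by decide) (by decide) (by decide)
  have e6 := pairPerm_eq (Equiv.swap (2:Fin 4) 3) 1 2 1 3 (by decide) (by decide) (by decide)
  fin_cases i <;>
    simp [xg, actS4, e1, e2, e3, e4, e5, e6] <;> try ring

lemma hz_s23 (i : Fin 3) :
    actS4 K (Equiv.swap 2 3) (zg K i) = C ((![1,1,1] : Fin 3 → K) i) * zg K (pb i) := by
  have e1 := pairPerm_eq (Equiv.swap (2:Fin 4) 3) 0 1 0 1 (by decide) (by decide) (by decide)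
  have e2 := pairPerm_eq (Equiv.swap (2:Fin 4) 3) 2 3 2 3 (by decide) (by decide) (by decide)
  have e3 := pairPerm_eq (Equiv.swap (2:Fin 4) 3) 0 2 0 3 (by decide) (by decide) (by decide)
  have e4 := pairPerm_eq (Equiv.swap (2:Fin 4) 3) 1 3 1 2 (by decide) (by decide) (by decide)
  have e5 := pairPerm_eq (Equiv.swap (2:Fin 4) 3) 0 3 0 2 (by decide) (by decide) (by decide)
  have e6 := pairPerm_eq (Equiv.swap (2:Fin 4) 3) 1 2 1 3 (by decide) (by decide) (by decide)
  fin_cases i <;>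
    simp [zg, actS4, e1, e2, e3, e4, e5, e6, map_neg, map_one] <;> try ring


lemma act_pSum (σ : Equiv.Perm (Fin 4)) (π : Equiv.Perm (Fin 3)) (ε : Fin 3 → K)
    (hx : ∀ i, actS4 K σ (xg K i) = xg K (π i))
    (hz : ∀ i, actS4 K σ (zg K i) = C (ε i) * zg K (π i))
    (hε : ∀ i, ε i * ε i = 1) (a b : ℕ) :
    actS4 K σ (pSum K a b) = pSum K a b := by
  have key : ∀ i, actS4 K σ (xg K i ^ a * zg K i ^ (2*b))
      = xg K (π i) ^ a * zg K (π i) ^ (2*b) := by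
    intro i
    rw [map_mul, map_pow, map_pow, hx, hz, mul_pow, ← map_pow]
    rw [show ε i ^ (2*b) = 1 by
      rw [pow_mul, show ε i ^ 2 = 1 by rw [sq]; exact hε i, one_pow]]
    rw [map_one, one_mul]
  rw [pSum, map_sum]
  simp_rw [key]
  exact Equiv.sum_comp π (fun j => xg K j ^ a * zg K j ^ (2*b))

lemma act_w (σ : Equiv.Perm (Fin 4)) (π : Equiv.Perm (Fin 3)) (ε : Fin 3 → K)
    (hz : ∀ i, actS4 K σ (zg K i) = C (ε i) * zg K (π i))
    (hprod : ε 0 * ε 1 * ε 2 = 1) :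
    actS4 K σ (zg K 0 * zg K 1 * zg K 2) = zg K 0 * zg K 1 * zg K 2 := by
  rw [map_mul, map_mul, hz 0, hz 1, hz 2]
  have hperm : zg K (π 0) * zg K (π 1) * zg K (π 2) = zg K 0 * zg K 1 * zg K 2 := by
    calc zg K (π 0) * zg K (π 1) * zg K (π 2)
        = ∏ i, zg K (π i) := (Fin.prod_univ_three (fun i => zg K (π i))).symm
      _ = ∏ i, zg K i := Equiv.prod_comp π _
      _ = _ := Fin.prod_univ_three _
  calc C (ε 0) * zg K (π 0) * (C (ε 1) * zg K (π 1)) * (C (ε 2) * zg K (π 2))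
      = C (ε 0 * ε 1 * ε 2) * (zg K (π 0) * zg K (π 1) * zg K (π 2)) := by
        rw [map_mul, map_mul]; ring
    _ = _ := by rw [hprod, map_one, one_mul, hperm]

lemma allswap (f : R4 K) (hf : ∀ (x y : Fin 4), x ≠ y → actS4 K (Equiv.swap x y) f = f) :
    ∀ σ, actS4 K σ f = f := fun σ =>
  Equiv.Perm.swap_induction_on σ (actS4_one f)
    (fun g x y hxy ih => by rw [actS4_mul, ih, hf x y hxy])

set_option maxHeartbeats 1000000 in
lemma pSum_mem (a b : ℕ) : pSum K a b ∈ S4Inv K := by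
  rw [mem_S4Inv]
  apply allswap
  intro x y hxy
  fin_cases x <;> fin_cases y
  · exact absurd rfl hxy
  · exact act_pSum _ pb (![1,-1,-1] : Fin 3 → K) hx_s01 hz_s01 (by intro i; fin_cases i <;> norm_num) a b
  · exact act_pSum _ pc (![-1,1,-1] : Fin 3 → K) hx_s02 hz_s02 (by intro i; fin_cases i <;> norm_num) a b
  · exact act_pSum _ pa (![-1,-1,1] : Fin 3 → K) hx_s03 hz_s03 (by intro i; fin_cases i <;> norm_num) a b
  · rw [Equiv.swap_comm]
    exact act_pSum _ pb (![1,-1,-1] : Fin 3 → K) hx_s01 hz_s01 (by intro i; fin_cases i <;> norm_num) a b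
  · exact absurd rfl hxy
  · exact act_pSum _ pa (![1,1,1] : Fin 3 → K) hx_s12 hz_s12 (by intro i; fin_cases i <;> norm_num) a b
  · exact act_pSum _ pc (![1,1,1] : Fin 3 → K) hx_s13 hz_s13 (by intro i; fin_cases i <;> norm_num) a b
  · rw [Equiv.swap_comm]
    exact act_pSum _ pc (![-1,1,-1] : Fin 3 → K) hx_s02 hz_s02 (by intro i; fin_cases i <;> norm_num) a b
  · rw [Equiv.swap_comm]
    exact act_pSum _ pa (![1,1,1] : Fin 3 → K) hx_s12 hz_s12 (by intro i; fin_cases i <;> norm_num) a b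
  · exact absurd rfl hxy
  · exact act_pSum _ pb (![1,1,1] : Fin 3 → K) hx_s23 hz_s23 (by intro i; fin_cases i <;> norm_num) a b
  · rw [Equiv.swap_comm]
    exact act_pSum _ pa (![-1,-1,1] : Fin 3 → K) hx_s03 hz_s03 (by intro i; fin_cases i <;> norm_num) a b
  · rw [Equiv.swap_comm]
    exact act_pSum _ pc (![1,1,1] : Fin 3 → K) hx_s13 hz_s13 (by intro i; fin_cases i <;> norm_num) a b
  · rw [Equiv.swap_comm]
    exact act_pSum _ pb (![1,1,1] : Fin 3 → K) hx_s23 hz_s23 (by intro i; fin_cases i <;> norm_num) a b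
  · exact absurd rfl hxy

set_option maxHeartbeats 1000000 in
lemma w_mem : zg K 0 * zg K 1 * zg K 2 ∈ S4Inv K := by
  rw [mem_S4Inv]
  apply allswap
  intro x y hxy
  fin_cases x <;> fin_cases y
  · exact absurd rfl hxy
  · exact act_w _ pb (![1,-1,-1] : Fin 3 → K) hz_s01 (by norm_num [Matrix.cons_val_two, Matrix.tail_cons, Matrix.head_cons])
  · exact act_w _ pc (![-1,1,-1] : Fin 3 → K) hz_s02 (by norm_num [Matrix.cons_val_two, Matrix.tail_cons, Matrix.head_cons])
  · exact act_w _ pa (![-1,-1,1] : Fin 3 → K) hz_s03 (by norm_num [Matrix.cons_val_two, Matrix.tail_cons, Matrix.head_cons])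
  · rw [Equiv.swap_comm]
    exact act_w _ pb (![1,-1,-1] : Fin 3 → K) hz_s01 (by norm_num [Matrix.cons_val_two, Matrix.tail_cons, Matrix.head_cons])
  · exact absurd rfl hxy
  · exact act_w _ pa (![1,1,1] : Fin 3 → K) hz_s12 (by norm_num [Matrix.cons_val_two, Matrix.tail_cons, Matrix.head_cons])
  · exact act_w _ pc (![1,1,1] : Fin 3 → K) hz_s13 (by norm_num [Matrix.cons_val_two, Matrix.tail_cons, Matrix.head_cons])
  · rw [Equiv.swap_comm]
    exact act_w _ pc (![-1,1,-1] : Fin 3 → K) hz_s02 (by norm_num [Matrix.cons_val_two, Matrix.tail_cons, Matrix.head_cons])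
  · rw [Equiv.swap_comm]
    exact act_w _ pa (![1,1,1] : Fin 3 → K) hz_s12 (by norm_num [Matrix.cons_val_two, Matrix.tail_cons, Matrix.head_cons])
  · exact absurd rfl hxy
  · exact act_w _ pb (![1,1,1] : Fin 3 → K) hz_s23 (by norm_num [Matrix.cons_val_two, Matrix.tail_cons, Matrix.head_cons])
  · rw [Equiv.swap_comm]
    exact act_w _ pa (![-1,-1,1] : Fin 3 → K) hz_s03 (by norm_num [Matrix.cons_val_two, Matrix.tail_cons, Matrix.head_cons])
  · rw [Equiv.swap_comm]
    exact act_w _ pc (![1,1,1] : Fin 3 → K) hz_s13 (by norm_num [Matrix.cons_val_two, Matrix.tail_cons, Matrix.head_cons])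
  · rw [Equiv.swap_comm]
    exact act_w _ pb (![1,1,1] : Fin 3 → K) hz_s23 (by norm_num [Matrix.cons_val_two, Matrix.tail_cons, Matrix.head_cons])
  · exact absurd rfl hxy

lemma hx_d0 (i : Fin 3) :
    actS4 K (Equiv.swap 0 1 * Equiv.swap 2 3 : Equiv.Perm (Fin 4)) (xg K i) = xg K i := by
  have e1 := pairPerm_eq (Equiv.swap 0 1 * Equiv.swap 2 3 : Equiv.Perm (Fin 4)) 0 1 0 1 (by decide) (by decide) (by decide)
  have e2 := pairPerm_eq (Equiv.swap 0 1 * Equiv.swap 2 3 : Equiv.Perm (Fin 4)) 2 3 2 3 (by decide) (by decide) (by decide)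
  have e3 := pairPerm_eq (Equiv.swap 0 1 * Equiv.swap 2 3 : Equiv.Perm (Fin 4)) 0 2 1 3 (by decide) (by decide) (by decide)
  have e4 := pairPerm_eq (Equiv.swap 0 1 * Equiv.swap 2 3 : Equiv.Perm (Fin 4)) 1 3 0 2 (by decide) (by decide) (by decide)
  have e5 := pairPerm_eq (Equiv.swap 0 1 * Equiv.swap 2 3 : Equiv.Perm (Fin 4)) 0 3 1 2 (by decide) (by decide) (by decide)
  have e6 := pairPerm_eq (Equiv.swap 0 1 * Equiv.swap 2 3 : Equiv.Perm (Fin 4)) 1 2 0 3 (by decide) (by decide) (by decide)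
  fin_cases i <;>
    simp [xg, actS4, e1, e2, e3, e4, e5, e6] <;> try ring

lemma hz_d0 (i : Fin 3) :
    actS4 K (Equiv.swap 0 1 * Equiv.swap 2 3 : Equiv.Perm (Fin 4)) (zg K i) = C ((![1,-1,-1] : Fin 3 → K) i) * zg K i := by
  have e1 := pairPerm_eq (Equiv.swap 0 1 * Equiv.swap 2 3 : Equiv.Perm (Fin 4)) 0 1 0 1 (by decide) (by decide) (by decide)
  have e2 := pairPerm_eq (Equiv.swap 0 1 * Equiv.swap 2 3 : Equiv.Perm (Fin 4)) 2 3 2 3 (by decide) (by decide) (by decide)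
  have e3 := pairPerm_eq (Equiv.swap 0 1 * Equiv.swap 2 3 : Equiv.Perm (Fin 4)) 0 2 1 3 (by decide) (by decide) (by decide)
  have e4 := pairPerm_eq (Equiv.swap 0 1 * Equiv.swap 2 3 : Equiv.Perm (Fin 4)) 1 3 0 2 (by decide) (by decide) (by decide)
  have e5 := pairPerm_eq (Equiv.swap 0 1 * Equiv.swap 2 3 : Equiv.Perm (Fin 4)) 0 3 1 2 (by decide) (by decide) (by decide)
  have e6 := pairPerm_eq (Equiv.swap 0 1 * Equiv.swap 2 3 : Equiv.Perm (Fin 4)) 1 2 0 3 (by decide) (by decide) (by decide)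
  fin_cases i <;>
    simp [zg, actS4, e1, e2, e3, e4, e5, e6, map_neg, map_one] <;> try ring

lemma hx_d1 (i : Fin 3) :
    actS4 K (Equiv.swap 0 2 * Equiv.swap 1 3 : Equiv.Perm (Fin 4)) (xg K i) = xg K i := by
  have e1 := pairPerm_eq (Equiv.swap 0 2 * Equiv.swap 1 3 : Equiv.Perm (Fin 4)) 0 1 2 3 (by decide) (by decide) (by decide)
  have e2 := pairPerm_eq (Equiv.swap 0 2 * Equiv.swap 1 3 : Equiv.Perm (Fin 4)) 2 3 0 1 (by decide) (by decide) (by decide)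
  have e3 := pairPerm_eq (Equiv.swap 0 2 * Equiv.swap 1 3 : Equiv.Perm (Fin 4)) 0 2 0 2 (by decide) (by decide) (by decide)
  have e4 := pairPerm_eq (Equiv.swap 0 2 * Equiv.swap 1 3 : Equiv.Perm (Fin 4)) 1 3 1 3 (by decide) (by decide) (by decide)
  have e5 := pairPerm_eq (Equiv.swap 0 2 * Equiv.swap 1 3 : Equiv.Perm (Fin 4)) 0 3 1 2 (by decide) (by decide) (by decide)
  have e6 := pairPerm_eq (Equiv.swap 0 2 * Equiv.swap 1 3 : Equiv.Perm (Fin 4)) 1 2 0 3 (by decide) (by decide) (by decide)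
  fin_cases i <;>
    simp [xg, actS4, e1, e2, e3, e4, e5, e6] <;> try ring

lemma hz_d1 (i : Fin 3) :
    actS4 K (Equiv.swap 0 2 * Equiv.swap 1 3 : Equiv.Perm (Fin 4)) (zg K i) = C ((![-1,1,-1] : Fin 3 → K) i) * zg K i := by
  have e1 := pairPerm_eq (Equiv.swap 0 2 * Equiv.swap 1 3 : Equiv.Perm (Fin 4)) 0 1 2 3 (by decide) (by decide) (by decide)
  have e2 := pairPerm_eq (Equiv.swap 0 2 * Equiv.swap 1 3 : Equiv.Perm (Fin 4)) 2 3 0 1 (by decide) (by decide) (by decide)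
  have e3 := pairPerm_eq (Equiv.swap 0 2 * Equiv.swap 1 3 : Equiv.Perm (Fin 4)) 0 2 0 2 (by decide) (by decide) (by decide)
  have e4 := pairPerm_eq (Equiv.swap 0 2 * Equiv.swap 1 3 : Equiv.Perm (Fin 4)) 1 3 1 3 (by decide) (by decide) (by decide)
  have e5 := pairPerm_eq (Equiv.swap 0 2 * Equiv.swap 1 3 : Equiv.Perm (Fin 4)) 0 3 1 2 (by decide) (by decide) (by decide)
  have e6 := pairPerm_eq (Equiv.swap 0 2 * Equiv.swap 1 3 : Equiv.Perm (Fin 4)) 1 2 0 3 (by decide) (by decide) (by decide)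
  fin_cases i <;>
    simp [zg, actS4, e1, e2, e3, e4, e5, e6, map_neg, map_one] <;> try ring

variable (K)

def gpre : PairIdx → P3 K := fun p =>
  if p = pr 0 1 (by decide) then C ((2:K)⁻¹) * (uu K 0 + vv K 0)
  else if p = pr 2 3 (by decide) then C ((2:K)⁻¹) * (uu K 0 - vv K 0)
  else if p = pr 0 2 (by decide) then C ((2:K)⁻¹) * (uu K 1 + vv K 1)
  else if p = pr 1 3 (by decide) then C ((2:K)⁻¹) * (uu K 1 - vv K 1)
  else if p = pr 0 3 (by decide) then C ((2:K)⁻¹) * (uu K 2 + vv K 2)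
  else C ((2:K)⁻¹) * (uu K 2 - vv K 2)

def psiR : P3 K →ₐ[K] R4 K := aeval (Sum.elim (xg K) (zg K))
def psiL : R4 K →ₐ[K] P3 K := aeval (gpre K)

variable {K}

@[simp] lemma X_inl (i : Fin 3) : (X (Sum.inl i) : P3 K) = uu K i := rfl
@[simp] lemma X_inr (i : Fin 3) : (X (Sum.inr i) : P3 K) = vv K i := rfl
@[simp] lemma psiR_u (i : Fin 3) : psiR K (uu K i) = xg K i := by
  simp only [psiR, uu, aeval_X, Sum.elim_inl]
@[simp] lemma psiR_v (i : Fin 3) : psiR K (vv K i) = zg K i := by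
  simp only [psiR, vv, aeval_X, Sum.elim_inr]

lemma gpre_01 (h : (0:Fin 4) ≠ 1) : gpre K (pr 0 1 h) = C ((2:K)⁻¹) * (uu K 0 + vv K 0) := by
  have e : pr 0 1 h = pr 0 1 (by decide) := rfl
  rw [e]; simp [gpre]
lemma gpre_23 (h : (2:Fin 4) ≠ 3) : gpre K (pr 2 3 h) = C ((2:K)⁻¹) * (uu K 0 - vv K 0) := by
  have e : pr 2 3 h = pr 2 3 (by decide) := rfl
  have n1 : (pr 2 3 (by decide) : PairIdx) ≠ pr 0 1 (by decide) := by decide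
  rw [e]; simp [gpre, n1]
lemma gpre_02 (h : (0:Fin 4) ≠ 2) : gpre K (pr 0 2 h) = C ((2:K)⁻¹) * (uu K 1 + vv K 1) := by
  have e : pr 0 2 h = pr 0 2 (by decide) := rfl
  have n1 : (pr 0 2 (by decide) : PairIdx) ≠ pr 0 1 (by decide) := by decide
  have n2 : (pr 0 2 (by decide) : PairIdx) ≠ pr 2 3 (by decide) := by decide
  rw [e]; simp [gpre, n1, n2]
lemma gpre_13 (h : (1:Fin 4) ≠ 3) : gpre K (pr 1 3 h) = C ((2:K)⁻¹) * (uu K 1 - vv K 1) := by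
  have e : pr 1 3 h = pr 1 3 (by decide) := rfl
  have n1 : (pr 1 3 (by decide) : PairIdx) ≠ pr 0 1 (by decide) := by decide
  have n2 : (pr 1 3 (by decide) : PairIdx) ≠ pr 2 3 (by decide) := by decide
  have n3 : (pr 1 3 (by decide) : PairIdx) ≠ pr 0 2 (by decide) := by decide
  rw [e]; simp [gpre, n1, n2, n3]
lemma gpre_03 (h : (0:Fin 4) ≠ 3) : gpre K (pr 0 3 h) = C ((2:K)⁻¹) * (uu K 2 + vv K 2) := by
  have e : pr 0 3 h = pr 0 3 (by decide) := rfl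
  have n1 : (pr 0 3 (by decide) : PairIdx) ≠ pr 0 1 (by decide) := by decide
  have n2 : (pr 0 3 (by decide) : PairIdx) ≠ pr 2 3 (by decide) := by decide
  have n3 : (pr 0 3 (by decide) : PairIdx) ≠ pr 0 2 (by decide) := by decide
  have n4 : (pr 0 3 (by decide) : PairIdx) ≠ pr 1 3 (by decide) := by decide
  rw [e]; simp [gpre, n1, n2, n3, n4]
lemma gpre_12 (h : (1:Fin 4) ≠ 2) : gpre K (pr 1 2 h) = C ((2:K)⁻¹) * (uu K 2 - vv K 2) := by
  have e : pr 1 2 h = pr 1 2 (by decide) := rfl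
  have n1 : (pr 1 2 (by decide) : PairIdx) ≠ pr 0 1 (by decide) := by decide
  have n2 : (pr 1 2 (by decide) : PairIdx) ≠ pr 2 3 (by decide) := by decide
  have n3 : (pr 1 2 (by decide) : PairIdx) ≠ pr 0 2 (by decide) := by decide
  have n4 : (pr 1 2 (by decide) : PairIdx) ≠ pr 1 3 (by decide) := by decide
  have n5 : (pr 1 2 (by decide) : PairIdx) ≠ pr 0 3 (by decide) := by decide
  rw [e]; simp [gpre, n1, n2, n3, n4, n5]

lemma half_lin1 (h2 : (2:K) ≠ 0) (x y : P3 K) :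
    C ((2:K)⁻¹) * (x + y) + C ((2:K)⁻¹) * (x - y) = x := by
  have h : C ((2:K)⁻¹) * C (2:K) = (1 : P3 K) := by
    rw [← C_mul, inv_mul_cancel₀ h2, C_1]
  calc C ((2:K)⁻¹) * (x + y) + C ((2:K)⁻¹) * (x - y)
      = C ((2:K)⁻¹) * C (2:K) * x := by rw [map_ofNat]; ring
    _ = x := by rw [h, one_mul]

lemma half_lin2 (h2 : (2:K) ≠ 0) (x y : P3 K) :
    C ((2:K)⁻¹) * (x + y) - C ((2:K)⁻¹) * (x - y) = y := by
  have h : C ((2:K)⁻¹) * C (2:K) = (1 : P3 K) := by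
    rw [← C_mul, inv_mul_cancel₀ h2, C_1]
  calc C ((2:K)⁻¹) * (x + y) - C ((2:K)⁻¹) * (x - y)
      = C ((2:K)⁻¹) * C (2:K) * y := by rw [map_ofNat]; ring
    _ = y := by rw [h, one_mul]

lemma halfR1 (h2 : (2:K) ≠ 0) (x y : R4 K) :
    C ((2:K)⁻¹) * ((x + y) + (x - y)) = x := by
  have h : C ((2:K)⁻¹) * C (2:K) = (1 : R4 K) := by
    rw [← C_mul, inv_mul_cancel₀ h2, C_1]
  calc C ((2:K)⁻¹) * ((x + y) + (x - y)) = C ((2:K)⁻¹) * C (2:K) * x := by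
        rw [map_ofNat]; ring
    _ = x := by rw [h, one_mul]

lemma halfR2 (h2 : (2:K) ≠ 0) (x y : R4 K) :
    C ((2:K)⁻¹) * ((x + y) - (x - y)) = y := by
  have h : C ((2:K)⁻¹) * C (2:K) = (1 : R4 K) := by
    rw [← C_mul, inv_mul_cancel₀ h2, C_1]
  calc C ((2:K)⁻¹) * ((x + y) - (x - y)) = C ((2:K)⁻¹) * C (2:K) * y := by
        rw [map_ofNat]; ring
    _ = y := by rw [h, one_mul]

lemma psiR_C (c : K) : psiR K (C c) = C c := by
  simp only [psiR, aeval_C, algebraMap_eq]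

lemma comp_LR (h2 : (2:K) ≠ 0) :
    (psiL K).comp (psiR K) = AlgHom.id K (P3 K) := by
  apply MvPolynomial.algHom_ext
  rintro (i | i) <;> fin_cases i
  · show psiL K (psiR K (uu K 0)) = uu K 0
    rw [psiR_u, show xg K 0 = X (pr 0 1 (by decide)) + X (pr 2 3 (by decide)) from rfl,
      map_add]
    simp only [psiL, aeval_X, gpre_01, gpre_23]
    exact half_lin1 h2 _ _
  · show psiL K (psiR K (uu K 1)) = uu K 1
    rw [psiR_u, show xg K 1 = X (pr 0 2 (by decide)) + X (pr 1 3 (by decide)) from rfl,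
      map_add]
    simp only [psiL, aeval_X, gpre_02, gpre_13]
    exact half_lin1 h2 _ _
  · show psiL K (psiR K (uu K 2)) = uu K 2
    rw [psiR_u, show xg K 2 = X (pr 0 3 (by decide)) + X (pr 1 2 (by decide)) from rfl,
      map_add]
    simp only [psiL, aeval_X, gpre_03, gpre_12]
    exact half_lin1 h2 _ _
  · show psiL K (psiR K (vv K 0)) = vv K 0
    rw [psiR_v, show zg K 0 = X (pr 0 1 (by decide)) - X (pr 2 3 (by decide)) from rfl,
      map_sub]
    simp only [psiL, aeval_X, gpre_01, gpre_23]
    exact half_lin2 h2 _ _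
  · show psiL K (psiR K (vv K 1)) = vv K 1
    rw [psiR_v, show zg K 1 = X (pr 0 2 (by decide)) - X (pr 1 3 (by decide)) from rfl,
      map_sub]
    simp only [psiL, aeval_X, gpre_02, gpre_13]
    exact half_lin2 h2 _ _
  · show psiL K (psiR K (vv K 2)) = vv K 2
    rw [psiR_v, show zg K 2 = X (pr 0 3 (by decide)) - X (pr 1 2 (by decide)) from rfl,
      map_sub]
    simp only [psiL, aeval_X, gpre_03, gpre_12]
    exact half_lin2 h2 _ _

lemma psiR_inj (h2 : (2:K) ≠ 0) : Function.Injective (psiR K) := by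
  intro x y hxy
  have := congrArg (psiL K) hxy
  rwa [← AlgHom.comp_apply, ← AlgHom.comp_apply, comp_LR h2, AlgHom.id_apply,
    AlgHom.id_apply] at this

lemma pair_cases : ∀ p : PairIdx, p = pr 0 1 (by decide) ∨ p = pr 2 3 (by decide)
    ∨ p = pr 0 2 (by decide) ∨ p = pr 1 3 (by decide) ∨ p = pr 0 3 (by decide)
    ∨ p = pr 1 2 (by decide) := by decide

lemma comp_RL (h2 : (2:K) ≠ 0) :
    (psiR K).comp (psiL K) = AlgHom.id K (R4 K) := by
  apply MvPolynomial.algHom_ext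
  intro p
  rcases pair_cases p with rfl | rfl | rfl | rfl | rfl | rfl
  · simp only [AlgHom.comp_apply, AlgHom.id_apply, psiL, aeval_X, gpre_01,
      map_mul, map_add, psiR_u, psiR_v, psiR_C]
    rw [show xg K 0 = X (pr 0 1 (by decide)) + X (pr 2 3 (by decide)) from rfl,
      show zg K 0 = X (pr 0 1 (by decide)) - X (pr 2 3 (by decide)) from rfl]
    exact halfR1 h2 _ _
  · simp only [AlgHom.comp_apply, AlgHom.id_apply, psiL, aeval_X, gpre_23,
      map_mul, map_sub, psiR_u, psiR_v, psiR_C]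
    rw [show xg K 0 = X (pr 0 1 (by decide)) + X (pr 2 3 (by decide)) from rfl,
      show zg K 0 = X (pr 0 1 (by decide)) - X (pr 2 3 (by decide)) from rfl]
    exact halfR2 h2 _ _
  · simp only [AlgHom.comp_apply, AlgHom.id_apply, psiL, aeval_X, gpre_02,
      map_mul, map_add, psiR_u, psiR_v, psiR_C]
    rw [show xg K 1 = X (pr 0 2 (by decide)) + X (pr 1 3 (by decide)) from rfl,
      show zg K 1 = X (pr 0 2 (by decide)) - X (pr 1 3 (by decide)) from rfl]
    exact halfR1 h2 _ _
  · simp only [AlgHom.comp_apply, AlgHom.id_apply, psiL, aeval_X, gpre_13,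
      map_mul, map_sub, psiR_u, psiR_v, psiR_C]
    rw [show xg K 1 = X (pr 0 2 (by decide)) + X (pr 1 3 (by decide)) from rfl,
      show zg K 1 = X (pr 0 2 (by decide)) - X (pr 1 3 (by decide)) from rfl]
    exact halfR2 h2 _ _
  · simp only [AlgHom.comp_apply, AlgHom.id_apply, psiL, aeval_X, gpre_03,
      map_mul, map_add, psiR_u, psiR_v, psiR_C]
    rw [show xg K 2 = X (pr 0 3 (by decide)) + X (pr 1 2 (by decide)) from rfl,
      show zg K 2 = X (pr 0 3 (by decide)) - X (pr 1 2 (by decide)) from rfl]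
    exact halfR1 h2 _ _
  · simp only [AlgHom.comp_apply, AlgHom.id_apply, psiL, aeval_X, gpre_12,
      map_mul, map_sub, psiR_u, psiR_v, psiR_C]
    rw [show xg K 2 = X (pr 0 3 (by decide)) + X (pr 1 2 (by decide)) from rfl,
      show zg K 2 = X (pr 0 3 (by decide)) - X (pr 1 2 (by decide)) from rfl]
    exact halfR2 h2 _ _

lemma comp_a : (actS4 K (Equiv.swap 1 2)).comp (psiR K) = (psiR K).comp (ra K) := by
  apply MvPolynomial.algHom_ext
  rintro (i | i)
  · simp only [AlgHom.comp_apply, X_inl, psiR_u, ra_u, hx_s12]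
  · simp only [AlgHom.comp_apply, X_inr, psiR_v, ra_v, hz_s12]
    fin_cases i <;> simp

lemma comp_b : (actS4 K (Equiv.swap 2 3)).comp (psiR K) = (psiR K).comp (rb K) := by
  apply MvPolynomial.algHom_ext
  rintro (i | i)
  · simp only [AlgHom.comp_apply, X_inl, psiR_u, rb_u, hx_s23]
  · simp only [AlgHom.comp_apply, X_inr, psiR_v, rb_v, hz_s23]
    fin_cases i <;> simp

lemma comp_0 : (actS4 K (Equiv.swap 0 1 * Equiv.swap 2 3)).comp (psiR K)
    = (psiR K).comp (n0 K) := by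
  apply MvPolynomial.algHom_ext
  rintro (i | i)
  · simp only [AlgHom.comp_apply, X_inl, psiR_u, n0_u, hx_d0]
  · simp only [AlgHom.comp_apply, X_inr, psiR_v, n0_v, hz_d0]
    fin_cases i <;> simp [map_neg, map_one]

lemma comp_1 : (actS4 K (Equiv.swap 0 2 * Equiv.swap 1 3)).comp (psiR K)
    = (psiR K).comp (n1 K) := by
  apply MvPolynomial.algHom_ext
  rintro (i | i)
  · simp only [AlgHom.comp_apply, X_inl, psiR_u, n1_u, hx_d1]
  · simp only [AlgHom.comp_apply, X_inr, psiR_v, n1_v, hz_d1]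
    fin_cases i <;> simp [map_neg, map_one]

lemma psi_Qs (a b : ℕ) : psiR K (Qs K a b) = pSum K a b := by
  simp only [Qs, pSum, map_sum, map_mul, map_pow, psiR_u, psiR_v]

lemma psi_ww : psiR K (ww K) = zg K 0 * zg K 1 * zg K 2 := by
  simp only [ww, map_mul, psiR_v]

end AuxInvariant

/-- Let `K` be a field of characteristic `0` or `> 3`.  The invariant
algebra `R^{S₄}` is generated as a `K`-algebra by the ten elements
`[x], [x²], [x³], [z²], [z⁴], [z⁶], [xz²], [x²z²], [xz⁴], z₁z₂z₃`. -/
theorem S4Inv_generated_by_ten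
    (hchar : ringChar K = 0 ∨ 3 < ringChar K) :
    Algebra.adjoin K
      {pSum K 1 0, pSum K 2 0, pSum K 3 0, pSum K 0 1, pSum K 0 2, pSum K 0 3,
        pSum K 1 1, pSum K 2 1, pSum K 1 2, zg K 0 * zg K 1 * zg K 2}
      = S4Inv K := by
  have hchar' : ∀ n : ℕ, 0 < n → n < 4 → (n : K) ≠ 0 := by
    intro n hn hn4 h
    have hd := (ringChar.spec K n).mp h
    rcases hchar with h0 | h4
    · rw [h0] at hd
      exact absurd (Nat.eq_zero_of_zero_dvd hd) (by omega)
    · exact absurd (Nat.le_of_dvd hn hd) (by omega)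
  have h2 : (2:K) ≠ 0 := by
    have := hchar' 2 (by norm_num) (by norm_num); simpa using this
  have h3 : (3:K) ≠ 0 := by
    have := hchar' 3 (by norm_num) (by norm_num); simpa using this
  apply le_antisymm
  · apply Algebra.adjoin_le
    intro x hx
    simp only [Set.mem_insert_iff, Set.mem_singleton_iff] at hx
    rcases hx with rfl | rfl | rfl | rfl | rfl | rfl | rfl | rfl | rfl | rfl
    exacts [pSum_mem 1 0, pSum_mem 2 0, pSum_mem 3 0, pSum_mem 0 1, pSum_mem 0 2,
      pSum_mem 0 3, pSum_mem 1 1, pSum_mem 2 1, pSum_mem 1 2, w_mem]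
  · intro f hf
    have hact : ∀ σ, actS4 K σ f = f := mem_S4Inv.mp hf
    set F := psiL K f with hFdef
    have hRF : psiR K F = f := by
      rw [hFdef, ← AlgHom.comp_apply, comp_RL h2, AlgHom.id_apply]
    have hinj := psiR_inj h2
    have key : ∀ (σ : Equiv.Perm (Fin 4)) (g : P3 K →ₐ[K] P3 K),
        (actS4 K σ).comp (psiR K) = (psiR K).comp g → g F = F := by
      intro σ g hcomp
      apply hinj
      calc psiR K (g F) = ((psiR K).comp g) F := rfl
        _ = ((actS4 K σ).comp (psiR K)) F := by rw [hcomp]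
        _ = actS4 K σ f := by rw [AlgHom.comp_apply, hRF]
        _ = f := hact _
        _ = psiR K F := hRF.symm
    have hF0 : n0 K F = F := key _ _ comp_0
    have hF1 : n1 K F = F := key _ _ comp_1
    have hFa : ra K F = F := key _ _ comp_a
    have hFb : rb K F = F := key _ _ comp_b
    have hmem : F ∈ AP K := main_P h2 h3 F hF0 hF1 hFa hFb
    have himg : f ∈ (AP K).map (psiR K) := ⟨F, hmem, hRF⟩
    rw [AP, AlgHom.map_adjoin] at himg
    have hsub : Algebra.adjoin K ((psiR K) '' genP K) ≤ Algebra.adjoin K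
        {pSum K 1 0, pSum K 2 0, pSum K 3 0, pSum K 0 1, pSum K 0 2, pSum K 0 3,
          pSum K 1 1, pSum K 2 1, pSum K 1 2, zg K 0 * zg K 1 * zg K 2} := by
      apply Algebra.adjoin_le
      rintro x ⟨y, hy, rfl⟩
      simp only [genP, Set.mem_insert_iff, Set.mem_singleton_iff] at hy
      rcases hy with rfl | rfl | rfl | rfl | rfl | rfl | rfl | rfl | rfl | rfl <;>
        first
        | (rw [psi_Qs]; exact Algebra.subset_adjoin (by simp))
        | (rw [psi_ww]; exact Algebra.subset_adjoin (by simp))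
    exact hsub himg

end
end
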